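/- arXiv:2211.10127 — 5 statements merged into one kernel-verified Lean document; each statement's English description precedes it below -/
import Mathlib

section
/- Any solution u of the initial value problem satisfies u'(r) → 0 as r → +∞. -/
open Set Real Filter

theorem statement1 (N : ℕ) (hN : 2 ≤ N) (ψ : ℝ → ℝ)
    (hψC2 : ContDiffOn ℝ 2 ψ (Ici 0))
    (hψpos : ∀ r > (0:ℝ), ψ r > 0)
    (hψ0 : ψ 0 = 0) (hψ''0 : deriv (deriv ψ) 0 = 0) (hψ'0 : deriv ψ 0 = 1)
    (hψ'pos : ∀ r > (0:ℝ), deriv ψ r > 0)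
    (Λ : EReal) (hΛpos : 0 < Λ)
    (hA3 : Filter.Tendsto (fun r => ((deriv ψ r / ψ r : ℝ) : EReal)) Filter.atTop (nhds Λ))
    (α : ℝ) (u : ℝ → ℝ)
    (huC2 : ContDiffOn ℝ 2 u (Ici 0)) (hu0 : u 0 = α) (hu'0 : deriv u 0 = 0)
    (hode : ∀ r > (0:ℝ), deriv (deriv u) r + ((N : ℝ) - 1) * (deriv ψ r / ψ r) * deriv u r
      + Real.exp (u r) = 0)
    : Tendsto (deriv u) atTop (nhds 0) := by
  obtain ⟨n, rfl⟩ : ∃ n, N = n + 2 := ⟨N - 2, by omega⟩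
  clear hN
  -- basic differentiability facts on (0, ∞)
  have hψd : ∀ r > (0:ℝ), HasDerivAt ψ (deriv ψ r) r := fun r hr =>
    ((hψC2.differentiableOn two_ne_zero).differentiableAt (Ici_mem_nhds hr)).hasDerivAt
  have hud : ∀ r > (0:ℝ), HasDerivAt u (deriv u r) r := fun r hr =>
    ((huC2.differentiableOn two_ne_zero).differentiableAt (Ici_mem_nhds hr)).hasDerivAt
  have hu'C1 : ContDiffOn ℝ 1 (deriv u) (Ioi 0) :=
    (huC2.mono Ioi_subset_Ici_self).deriv_of_isOpen isOpen_Ioi (by norm_num)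
  have hu'd : ∀ r > (0:ℝ), HasDerivAt (deriv u) (deriv (deriv u) r) r := fun r hr =>
    ((hu'C1.differentiableOn one_ne_zero).differentiableAt (isOpen_Ioi.mem_nhds hr)).hasDerivAt
  have hvcont : ContinuousOn (deriv u) (Ioi 0) := hu'C1.continuousOn
  have hucont : ContinuousOn u (Ioi 0) := (huC2.continuousOn).mono Ioi_subset_Ici_self
  have hψcont : ContinuousOn ψ (Ioi 0) := (hψC2.continuousOn).mono Ioi_subset_Ici_self
  have hψne : ∀ r > (0:ℝ), ψ r ≠ 0 := fun r hr => (hψpos r hr).ne'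
  -- rewritten ODE
  have hode' : ∀ r > (0:ℝ), deriv (deriv u) r =
      -(((n:ℝ)+1) * (deriv ψ r / ψ r) * deriv u r) - Real.exp (u r) := by
    intro r hr
    have h := hode r hr
    push_cast at h
    linarith
  -- Step A : F = ψ^(n+1) * u' is antitone on (0,∞) with limit 0 at 0⁺, hence u' ≤ 0
  set F : ℝ → ℝ := fun r => ψ r ^ (n+1) * deriv u r with hF
  have hFd : ∀ r > (0:ℝ), HasDerivAt F (-(ψ r ^ (n+1) * Real.exp (u r))) r := by
    intro r hr
    have h1 : HasDerivAt (fun x => ψ x ^ (n+1))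
        (((n:ℝ)+1) * ψ r ^ n * deriv ψ r) r := by
      have := (hψd r hr).fun_pow (n+1)
      simpa using this
    have h2 := h1.fun_mul (hu'd r hr)
    rw [hode' r hr] at h2
    refine h2.congr_deriv ?_
    have hne := hψne r hr
    field_simp
    ring
  have hFanti : AntitoneOn F (Ioi 0) := by
    apply antitoneOn_of_hasDerivWithinAt_nonpos (convex_Ioi 0) ((hψcont.pow _).mul hvcont)
      (f' := fun r => -(ψ r ^ (n+1) * Real.exp (u r)))
    · intro x hx
      rw [interior_Ioi] at hx
      exact (hFd x hx).hasDerivWithinAt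
    · intro x hx
      rw [interior_Ioi] at hx
      have := Real.exp_pos (u x)
      nlinarith [pow_pos (hψpos x hx) (n+1)]
  have hF0 : Tendsto F (nhdsWithin 0 (Ioi 0)) (nhds 0) := by
    set w : ℝ → ℝ := derivWithin u (Ici 0) with hw
    have hwcont : ContinuousOn w (Ici 0) :=
      huC2.continuousOn_derivWithin (uniqueDiffOn_Ici 0) one_le_two
    have hwt : Tendsto w (nhdsWithin 0 (Ioi 0)) (nhds (w 0)) :=
      (hwcont 0 self_mem_Ici).mono_left (nhdsWithin_mono _ Ioi_subset_Ici_self)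
    have hψt : Tendsto (fun r => ψ r ^ (n+1)) (nhdsWithin 0 (Ioi 0)) (nhds 0) := by
      have : Tendsto ψ (nhdsWithin 0 (Ioi 0)) (nhds 0) := by
        have := (hψC2.continuousOn 0 self_mem_Ici).mono_left
          (nhdsWithin_mono _ Ioi_subset_Ici_self)
        rwa [hψ0] at this
      have := this.pow (n+1)
      simpa using this
    have hmul : Tendsto (fun r => ψ r ^ (n+1) * w r) (nhdsWithin 0 (Ioi 0))
        (nhds (0 * w 0)) := hψt.mul hwt
    rw [zero_mul] at hmul
    apply hmul.congr'
    filter_upwards [self_mem_nhdsWithin] with r hr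
    have : w r = deriv u r := derivWithin_of_mem_nhds (Ici_mem_nhds hr)
    simp [hF, this]
  have hvle : ∀ r > (0:ℝ), deriv u r ≤ 0 := by
    intro r hr
    have hFr : F r ≤ 0 := by
      refine ge_of_tendsto hF0 ?_
      have h1 : ∀ᶠ ε in nhdsWithin 0 (Ioi 0), ε < r :=
        mem_nhdsWithin_of_mem_nhds (Iio_mem_nhds hr)
      filter_upwards [self_mem_nhdsWithin, h1] with ε hε1 hε2
      exact hFanti hε1 hr hε2.le
    simp only [hF] at hFr
    nlinarith [pow_pos (hψpos r hr) (n+1)]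
  -- Step B : u is antitone on (0,∞)
  have huanti : AntitoneOn u (Ioi 0) := by
    apply antitoneOn_of_hasDerivWithinAt_nonpos (convex_Ioi 0) hucont (f' := deriv u)
    · intro x hx
      rw [interior_Ioi] at hx
      exact (hud x hx).hasDerivWithinAt
    · intro x hx
      rw [interior_Ioi] at hx
      exact hvle x hx
  -- Step C : energy E
  set E : ℝ → ℝ := fun r => (deriv u r)^2 / 2 + Real.exp (u r) with hE
  have hEd : ∀ r > (0:ℝ), HasDerivAt E
      (-(((n:ℝ)+1) * (deriv ψ r / ψ r) * (deriv u r)^2)) r := by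
    intro r hr
    have h1 : HasDerivAt (fun x => (deriv u x)^2 / 2)
        (2 * deriv u r ^ 1 * deriv (deriv u) r / 2) r := ((hu'd r hr).pow 2).div_const 2
    have h2 : HasDerivAt (fun x => Real.exp (u x)) (Real.exp (u r) * deriv u r) r :=
      (hud r hr).exp
    have h3 := h1.fun_add h2
    rw [hode' r hr] at h3
    refine h3.congr_deriv ?_
    ring
  have hEcont : ContinuousOn E (Ioi 0) :=
    ((hvcont.pow 2).div_const 2).add (Real.continuous_exp.comp_continuousOn hucont)
  have hEnonneg : ∀ r, 0 ≤ E r := by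
    intro r
    have := Real.exp_pos (u r)
    positivity
  have hEanti : AntitoneOn E (Ioi 0) := by
    apply antitoneOn_of_hasDerivWithinAt_nonpos (convex_Ioi 0) hEcont
      (f' := fun r => -(((n:ℝ)+1) * (deriv ψ r / ψ r) * (deriv u r)^2))
    · intro x hx
      rw [interior_Ioi] at hx
      exact (hEd x hx).hasDerivWithinAt
    · intro x hx
      rw [interior_Ioi] at hx
      have hb : 0 ≤ deriv ψ x / ψ x := le_of_lt (div_pos (hψ'pos x hx) (hψpos x hx))
      have hnn : (0:ℝ) ≤ (n:ℝ)+1 := by positivity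
      have := mul_nonneg (mul_nonneg hnn hb) (sq_nonneg (deriv u x))
      linarith
  -- Step D : limits at infinity
  have hmax : ∀ r : ℝ, (0:ℝ) < max r 1 := fun r => lt_of_lt_of_le one_pos (le_max_right r 1)
  -- limit of E
  set UE : ℝ → ℝ := fun r => E (max r 1) with hUE
  have hUEanti : Antitone UE := by
    intro a b hab
    exact hEanti (hmax a) (hmax b) (max_le_max hab le_rfl)
  have hUEbdd : BddBelow (range UE) := ⟨0, by rintro x ⟨r, rfl⟩; exact hEnonneg _⟩
  have hUEt : Tendsto UE atTop (nhds (⨅ r, UE r)) := tendsto_atTop_ciInf hUEanti hUEbdd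
  have hEeq : E =ᶠ[atTop] UE := by
    filter_upwards [eventually_ge_atTop (1:ℝ)] with r hr
    simp [hUE, max_eq_left hr]
  have hEt : Tendsto E atTop (nhds (⨅ r, UE r)) := hUEt.congr' hEeq.symm
  -- limit of exp ∘ u
  set Ug : ℝ → ℝ := fun r => Real.exp (u (max r 1)) with hUg
  have hUganti : Antitone Ug := by
    intro a b hab
    exact Real.exp_le_exp.2 (huanti (hmax a) (hmax b) (max_le_max hab le_rfl))
  have hUgbdd : BddBelow (range Ug) := ⟨0, by rintro x ⟨r, rfl⟩; exact (Real.exp_pos _).le⟩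
  have hUgt : Tendsto Ug atTop (nhds (⨅ r, Ug r)) := tendsto_atTop_ciInf hUganti hUgbdd
  have hgt : Tendsto (fun r => Real.exp (u r)) atTop (nhds (⨅ r, Ug r)) := by
    apply hUgt.congr'
    filter_upwards [eventually_ge_atTop (1:ℝ)] with r hr
    simp [hUg, max_eq_left hr]
  set ℓE := ⨅ r, UE r with hℓE
  set ℓg := ⨅ r, Ug r with hℓg
  -- limit of (u')²
  set c : ℝ := 2 * (ℓE - ℓg) with hc
  have hv2 : Tendsto (fun r => (deriv u r)^2) atTop (nhds c) := by
    have h := (hEt.sub hgt).const_mul 2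
    apply h.congr
    intro r
    simp only [hE]
    ring
  have hc0 : 0 ≤ c := ge_of_tendsto hv2 (Eventually.of_forall fun r => sq_nonneg _)
  -- u' tends to -√c
  have hvt : Tendsto (deriv u) atTop (nhds (-Real.sqrt c)) := by
    have h1 : Tendsto (fun r => -Real.sqrt ((deriv u r)^2)) atTop (nhds (-Real.sqrt c)) :=
      (((Real.continuous_sqrt.tendsto c).comp hv2)).neg
    apply h1.congr'
    filter_upwards [eventually_gt_atTop (0:ℝ)] with r hr
    rw [Real.sqrt_sq_eq_abs, abs_of_nonpos (hvle r hr), neg_neg]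
  -- Step E : c = 0
  have hceq : c = 0 := by
    by_contra hcne
    have hcpos : 0 < c := lt_of_le_of_ne hc0 (Ne.symm hcne)
    obtain ⟨m, hm0, hmΛ⟩ : ∃ m : ℝ, (0:EReal) < (m:EReal) ∧ (m:EReal) < Λ :=
      EReal.lt_iff_exists_real_btwn.1 hΛpos
    have hm0' : (0:ℝ) < m := by exact_mod_cast hm0
    have hbev : ∀ᶠ r in atTop, m < deriv ψ r / ψ r := by
      have := hA3.eventually (eventually_gt_nhds hmΛ)
      filter_upwards [this] with r hr
      exact_mod_cast hr
    have hv2ev : ∀ᶠ r in atTop, c/2 ≤ (deriv u r)^2 :=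
      hv2.eventually (eventually_ge_nhds (by linarith))
    obtain ⟨R, hR⟩ := (hbev.and (hv2ev.and (eventually_ge_atTop (1:ℝ)))).exists_forall_of_atTop
    have hR1 : (1:ℝ) ≤ R := (hR R le_rfl).2.2
    have hR0 : (0:ℝ) < R := lt_of_lt_of_le one_pos hR1
    set K : ℝ := ((n:ℝ)+1) * m * (c/2) with hK
    have hKpos : 0 < K := by positivity
    have hanti : AntitoneOn (fun r => E r + K * r) (Ici R) := by
      apply antitoneOn_of_hasDerivWithinAt_nonpos (convex_Ici R)
        (f' := fun x => -(((n:ℝ)+1) * (deriv ψ x / ψ x) * (deriv u x)^2) + K * 1)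
      · exact (hEcont.mono (fun x hx => lt_of_lt_of_le hR0 hx)).add
          (continuousOn_const.mul continuousOn_id)
      · intro x hx
        rw [interior_Ici] at hx
        have hx0 : (0:ℝ) < x := lt_trans hR0 hx
        exact ((hEd x hx0).add ((hasDerivAt_id x).const_mul K)).hasDerivWithinAt
      · intro x hx
        rw [interior_Ici] at hx
        have hx0 : (0:ℝ) < x := lt_trans hR0 hx
        have h1 : m < deriv ψ x / ψ x := (hR x hx.le).1
        have h2 : c/2 ≤ (deriv u x)^2 := (hR x hx.le).2.1
        have hn1 : (0:ℝ) < (n:ℝ)+1 := by positivity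
        have hb0 : 0 < deriv ψ x / ψ x := lt_trans hm0' h1
        have hmm : m * (c/2) ≤ (deriv ψ x / ψ x) * (deriv u x)^2 :=
          mul_le_mul h1.le h2 (by positivity) hb0.le
        have : K ≤ ((n:ℝ)+1) * (deriv ψ x / ψ x) * (deriv u x)^2 := by
          rw [hK]
          nlinarith [mul_le_mul_of_nonneg_left hmm hn1.le]
        linarith
    set r1 : ℝ := max R ((E R + K * R + 1) / K) with hr1
    have hr1R : R ≤ r1 := le_max_left _ _
    have h1 : E r1 + K * r1 ≤ E R + K * R := hanti self_mem_Ici hr1R hr1R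
    have h2 : (E R + K * R + 1) / K ≤ r1 := le_max_right _ _
    have h3 : E R + K * R + 1 ≤ K * r1 := by
      rw [div_le_iff₀ hKpos] at h2
      linarith
    have := hEnonneg r1
    linarith
  rw [hceq, Real.sqrt_zero, neg_zero] at hvt
  exact hvt
end

section
/- For any solution u of the initial value problem, the limit as r → +∞ of (u''(r)/u'(r))·(ψ(r)/ψ'(r)) exists in the extended real line [−∞,+∞]. -/
open Set Real Filter


/-- If `h s ≤ θ` and whenever `h ≥ θ` the derivative is `≤ 0`, then `h t ≤ θ` for `t ≥ s`. -/
lemma stay_le {h : ℝ → ℝ} {θ s t : ℝ} (hst : s ≤ t)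
    (hdiff : ∀ σ ∈ Icc s t, DifferentiableAt ℝ h σ)
    (hder : ∀ σ ∈ Ioo s t, θ < h σ → deriv h σ ≤ 0)
    (hs : h s ≤ θ) : h t ≤ θ := by
  by_contra hth
  push_neg at hth
  have hcont : ContinuousOn h (Icc s t) := fun σ hσ => (hdiff σ hσ).continuousAt.continuousWithinAt
  set S : Set ℝ := Icc s t ∩ h ⁻¹' (Iic θ) with hS
  have hSclosed : IsClosed S := hcont.preimage_isClosed_of_isClosed isClosed_Icc isClosed_Iic
  have hSne : S.Nonempty := ⟨s, ⟨le_rfl, hst⟩, hs⟩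
  have hSbdd : BddAbove S := ⟨t, fun σ hσ => hσ.1.2⟩
  set τ := sSup S with hτ
  have hτS : τ ∈ S := hSclosed.csSup_mem hSne hSbdd
  have hτt : τ ≤ t := hτS.1.2
  have hsτ : s ≤ τ := hτS.1.1
  have hτθ : h τ ≤ θ := hτS.2
  have hτlt : τ < t := lt_of_le_of_ne hτt (by intro he; rw [he] at hτθ; exact absurd hτθ (not_le.mpr hth))
  have hgt : ∀ σ ∈ Ioc τ t, θ < h σ := by
    intro σ hσ
    by_contra hle
    push_neg at hle
    have : σ ∈ S := ⟨⟨hsτ.trans hσ.1.le, hσ.2⟩, hle⟩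
    exact absurd (le_csSup hSbdd this) (not_le.mpr hσ.1)
  have hanti : AntitoneOn h (Icc τ t) := by
    apply antitoneOn_of_deriv_nonpos (convex_Icc τ t)
      (hcont.mono (Icc_subset_Icc hsτ le_rfl))
    · intro σ hσ
      rw [interior_Icc] at hσ
      exact ((hdiff σ ⟨hsτ.trans hσ.1.le, hσ.2.le⟩).differentiableWithinAt)
    · intro σ hσ
      rw [interior_Icc] at hσ
      exact hder σ ⟨lt_of_le_of_lt hsτ hσ.1, hσ.2⟩ (hgt σ ⟨hσ.1, hσ.2.le⟩)
  exact absurd ((hanti ⟨le_rfl, hτlt.le⟩ ⟨hτlt.le, le_rfl⟩ hτlt.le).trans hτθ) (not_le.mpr hth)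

lemma lin_decay {h : ℝ → ℝ} {c s : ℝ}
    (hdiff : ∀ r ∈ Ici s, DifferentiableAt ℝ h r)
    (hder : ∀ r ∈ Ioi s, deriv h r ≤ -c) :
    ∀ t ≥ s, h t ≤ h s - c * (t - s) := by
  intro t ht
  have hcd : ∀ r : ℝ, DifferentiableAt ℝ (fun r : ℝ => c * r) r := fun r => by fun_prop
  have hganti : AntitoneOn (fun r => h r + c * r) (Ici s) := by
    apply antitoneOn_of_deriv_nonpos (convex_Ici s)
    · exact fun r hr => ((hdiff r hr).add (hcd r)).continuousAt.continuousWithinAt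
    · intro r hr
      rw [interior_Ici] at hr
      exact ((hdiff r (mem_Ici.mpr (mem_Ioi.mp hr).le)).add (hcd r)).differentiableWithinAt
    · intro r hr
      rw [interior_Ici] at hr
      rw [deriv_fun_add (hdiff r (mem_Ici.mpr (mem_Ioi.mp hr).le)) (hcd r), deriv_const_mul_field]
      have := hder r hr
      simp only [deriv_id'', mul_one]
      linarith
  have := hganti (mem_Ici.mpr le_rfl) (mem_Ici.mpr ht) ht
  simp only at this
  linarith
lemma barrier_le {h : ℝ → ℝ} {θ c : ℝ} (hc : 0 < c)
    (hev : ∀ᶠ r in atTop, DifferentiableAt ℝ h r ∧ (θ ≤ h r → deriv h r ≤ -c)) :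
    ∀ᶠ r in atTop, h r ≤ θ := by
  obtain ⟨r0, hr0⟩ := eventually_atTop.mp hev
  have hex : ∃ s ≥ r0, h s ≤ θ := by
    by_contra hall
    push_neg at hall
    have hdec := lin_decay (c := c) (s := r0)
      (fun r hr => (hr0 r hr).1)
      (fun r hr => (hr0 r (le_of_lt hr)).2 (hall r (le_of_lt hr)).le)
    set t := max r0 (r0 + (h r0 - θ) / c + 1) with hT
    have htr0 : r0 ≤ t := le_max_left _ _
    have := hdec t htr0
    have h2 : r0 + (h r0 - θ) / c + 1 ≤ t := le_max_right _ _
    have h3 : h r0 - θ ≤ c * ((h r0 - θ)/c) := by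
      rw [mul_div_cancel₀ _ (ne_of_gt hc)]
    nlinarith [hall t htr0, mul_le_mul_of_nonneg_left (by linarith : (h r0 - θ)/c + 1 ≤ t - r0) hc.le]
  obtain ⟨s, hsr0, hs⟩ := hex
  filter_upwards [eventually_ge_atTop s] with t hts
  exact stay_le hts (fun σ hσ => (hr0 σ (hsr0.trans hσ.1)).1)
    (fun σ hσ hθ => ((hr0 σ (hsr0.trans hσ.1.le)).2 hθ.le).trans (by linarith))
    hs

lemma barrier_ge {h : ℝ → ℝ} {θ c : ℝ} (hc : 0 < c)
    (hev : ∀ᶠ r in atTop, DifferentiableAt ℝ h r ∧ (h r ≤ θ → c ≤ deriv h r)) :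
    ∀ᶠ r in atTop, θ ≤ h r := by
  have := barrier_le (h := fun r => -h r) (θ := -θ) hc ?_
  · filter_upwards [this] with r hr; linarith
  · filter_upwards [hev] with r hr
    refine ⟨hr.1.neg, fun hle => ?_⟩
    rw [deriv.fun_neg]
    have := hr.2 (by linarith)
    linarith
lemma stay_ge {h : ℝ → ℝ} {θ s t : ℝ} (hst : s ≤ t)
    (hdiff : ∀ σ ∈ Icc s t, DifferentiableAt ℝ h σ)
    (hder : ∀ σ ∈ Ioo s t, h σ < θ → 0 ≤ deriv h σ)
    (hs : θ ≤ h s) : θ ≤ h t := by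
  have := stay_le (h := fun r => -h r) (θ := -θ) hst
    (fun σ hσ => (hdiff σ hσ).neg)
    (fun σ hσ hθ => by
      rw [deriv.fun_neg]
      have := hder σ hσ (by linarith)
      linarith)
    (by simpa using hs)
  simpa using this

/-- Main convergence engine for the logistic-type ODE `x' = x m (β - x)`. -/
lemma engine {x β m : ℝ → ℝ} {B : ℝ} (hB : 0 < B)
    (hev : ∀ᶠ r in atTop, DifferentiableAt ℝ x r ∧ 0 < x r ∧ 1 ≤ m r ∧
      deriv x r = x r * m r * (β r - x r))
    (hβ : Tendsto β atTop (nhds B)) :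
    Tendsto x atTop (nhds B) := by
  rw [Metric.tendsto_nhds]
  intro ε hε
  set e := min (ε/2) (B/2) with he_def
  have he : 0 < e := lt_min (by linarith) (by linarith)
  have heB : e < B := lt_of_le_of_lt (min_le_right _ _) (by linarith)
  have heε : e < ε := lt_of_le_of_lt (min_le_left _ _) (by linarith)
  have hβe : ∀ᶠ r in atTop, |β r - B| ≤ e/2 := by
    have := Metric.tendsto_nhds.mp hβ (e/2) (by linarith)
    filter_upwards [this] with r hr
    rw [Real.dist_eq] at hr; exact hr.le
  -- upper bound
  have hub : ∀ᶠ r in atTop, x r ≤ B + e := by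
    apply barrier_le (c := e/2 * (B+e)) (by nlinarith)
    filter_upwards [hev, hβe] with r ⟨hd, hx, hm, hid⟩ hβr
    refine ⟨hd, fun hge => ?_⟩
    rw [hid]
    have h1 : β r - x r ≤ -(e/2) := by
      have := abs_le.mp hβr
      linarith
    have h2 : 0 ≤ x r * (x r - β r) * (m r - 1) := by
      apply mul_nonneg (mul_nonneg hx.le (by linarith)) (by linarith)
    nlinarith [mul_le_mul_of_nonneg_left h1 hx.le]
  -- lower bound
  have hlb : ∀ᶠ r in atTop, B - e ≤ x r := by
    obtain ⟨r1, hr1⟩ := eventually_atTop.mp (hev.and hβe)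
    have hgrow : ∀ r ≥ r1, x r < B - e → e/2 ≤ deriv x r / x r := by
      intro r hr hxr
      obtain ⟨⟨hd, hx, hm, hid⟩, hβr⟩ := hr1 r hr
      have h1 : e/2 ≤ β r - x r := by
        have := abs_le.mp hβr; linarith
      rw [le_div_iff₀ hx, hid]
      have k : 0 ≤ x r * (m r - 1) * (β r - x r) :=
        mul_nonneg (mul_nonneg hx.le (by linarith)) (by linarith)
      nlinarith [mul_le_mul_of_nonneg_left h1 hx.le]
    have hexist : ∃ s ≥ r1, B - e ≤ x s := by
      by_contra hall
      push_neg at hall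
      -- log grows linearly
      have hmono : MonotoneOn (fun r => Real.log (x r) - e/2 * r) (Ici r1) := by
        apply monotoneOn_of_deriv_nonneg (convex_Ici r1)
        · intro r hr
          obtain ⟨⟨hd, hx, _, _⟩, _⟩ := hr1 r hr
          exact (((hd.hasDerivAt.log (ne_of_gt hx)).sub
            ((hasDerivAt_id r).const_mul (e/2))).continuousAt).continuousWithinAt
        · intro r hr
          rw [interior_Ici] at hr
          obtain ⟨⟨hd, hx, _, _⟩, _⟩ := hr1 r hr.le
          exact (((hd.hasDerivAt.log (ne_of_gt hx)).sub
            ((hasDerivAt_id r).const_mul (e/2))).differentiableAt).differentiableWithinAt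
        · intro r hr
          rw [interior_Ici] at hr
          obtain ⟨⟨hd, hx, _, _⟩, _⟩ := hr1 r hr.le
          have hder : HasDerivAt (fun r => Real.log (x r) - e/2 * r)
              (deriv x r / x r - e/2 * 1) r :=
            (hd.hasDerivAt.log (ne_of_gt hx)).sub ((hasDerivAt_id r).const_mul (e/2))
          rw [hder.deriv]
          have := hgrow r hr.le (hall r hr.le)
          linarith
      set t := max r1 (r1 + (2/e) * (Real.log (B-e) - Real.log (x r1) + 1)) with ht_def
      have htr1 : r1 ≤ t := le_max_left _ _
      have ht2 : r1 + (2/e) * (Real.log (B-e) - Real.log (x r1) + 1) ≤ t := le_max_right _ _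
      have hL := hmono (mem_Ici.mpr le_rfl) (mem_Ici.mpr htr1) htr1
      simp only at hL
      have hlog : Real.log (B-e) + 1 ≤ Real.log (x t) := by
        have hc : e/2 * ((2/e) * (Real.log (B-e) - Real.log (x r1) + 1)) =
            Real.log (B-e) - Real.log (x r1) + 1 := by
          field_simp
        nlinarith [mul_le_mul_of_nonneg_left (by linarith : (2/e) * (Real.log (B-e) - Real.log (x r1) + 1) ≤ t - r1) (by linarith : (0:ℝ) ≤ e/2)]
      obtain ⟨⟨_, hxt, _, _⟩, _⟩ := hr1 t htr1
      have : B - e < x t := by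
        calc B - e = Real.exp (Real.log (B-e)) := (Real.exp_log (by linarith)).symm
        _ < Real.exp (Real.log (x t)) := Real.exp_lt_exp.mpr (by linarith)
        _ = x t := Real.exp_log hxt
      exact absurd this (not_lt.mpr (hall t htr1).le)
    obtain ⟨s, hsr1, hs⟩ := hexist
    filter_upwards [eventually_ge_atTop s] with t hts
    apply stay_ge hts (fun σ hσ => (hr1 σ (hsr1.trans hσ.1)).1.1)
      (fun σ hσ hlt => ?_) hs
    obtain ⟨⟨hd, hx, hm, hid⟩, hβr⟩ := hr1 σ (hsr1.trans hσ.1.le)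
    have hβ1 := abs_le.mp hβr
    rw [hid]
    exact mul_nonneg (mul_nonneg hx.le (by linarith)) (by linarith)
  filter_upwards [hub, hlb] with r h1 h2
  rw [Real.dist_eq, abs_sub_lt_iff]
  constructor <;> linarith
set_option maxHeartbeats 1000000 in
theorem statement2 (N : ℕ) (hN : 2 ≤ N) (ψ : ℝ → ℝ)
    (hψC2 : ContDiffOn ℝ 2 ψ (Ici 0))
    (hψpos : ∀ r > (0:ℝ), ψ r > 0)
    (hψ0 : ψ 0 = 0) (hψ''0 : deriv (deriv ψ) 0 = 0) (hψ'0 : deriv ψ 0 = 1)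
    (hψ'pos : ∀ r > (0:ℝ), deriv ψ r > 0)
    (Λ : EReal) (hΛpos : 0 < Λ)
    (hA3 : Filter.Tendsto (fun r => ((deriv ψ r / ψ r : ℝ) : EReal)) Filter.atTop (nhds Λ))
    (hA4 : Λ = ⊤ → ∃ C : ℝ, ∀ᶠ r in Filter.atTop,
      |deriv (fun s => Real.log (deriv ψ s / ψ s)) r| ≤ C)
    (α : ℝ) (u : ℝ → ℝ)
    (huC2 : ContDiffOn ℝ 2 u (Ici 0)) (hu0 : u 0 = α) (hu'0 : deriv u 0 = 0)
    (hode : ∀ r > (0:ℝ), deriv (deriv u) r + ((N : ℝ) - 1) * (deriv ψ r / ψ r) * deriv u r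
      + Real.exp (u r) = 0)
    : ∃ L : EReal, Tendsto
        (fun r => (((deriv (deriv u) r / deriv u r) * (ψ r / deriv ψ r) : ℝ) : EReal))
        atTop (nhds L) := by
  -- basic regularity
  have hreg : ∀ (v : ℝ → ℝ), ContDiffOn ℝ 2 v (Ici 0) → ∀ r > (0:ℝ),
      DifferentiableAt ℝ v r ∧ DifferentiableAt ℝ (deriv v) r := by
    intro v hv r hr
    have h2 : ContDiffOn ℝ (1+1) v (Ioi 0) := by
      exact_mod_cast hv.mono (Ioi_subset_Ici le_rfl)
    rw [contDiffOn_succ_iff_deriv_of_isOpen isOpen_Ioi] at h2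
    refine ⟨(h2.1 r hr).differentiableAt (isOpen_Ioi.mem_nhds hr), ?_⟩
    exact (h2.2.2.differentiableOn one_ne_zero r hr).differentiableAt (isOpen_Ioi.mem_nhds hr)
  have hu1 : ∀ r > (0:ℝ), DifferentiableAt ℝ u r := fun r hr => (hreg u huC2 r hr).1
  have hu2 : ∀ r > (0:ℝ), DifferentiableAt ℝ (deriv u) r := fun r hr => (hreg u huC2 r hr).2
  have hψ1 : ∀ r > (0:ℝ), DifferentiableAt ℝ ψ r := fun r hr => (hreg ψ hψC2 r hr).1
  have hψ2 : ∀ r > (0:ℝ), DifferentiableAt ℝ (deriv ψ) r := fun r hr => (hreg ψ hψC2 r hr).2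
  set φ : ℝ → ℝ := fun r => deriv ψ r / ψ r with hφ_def
  have hφd : ∀ r > (0:ℝ), DifferentiableAt ℝ φ r := by
    intro r hr
    rw [hφ_def]
    exact (hψ2 r hr).div (hψ1 r hr) (ne_of_gt (hψpos r hr))
  have hφpos : ∀ r > (0:ℝ), 0 < φ r := by
    intro r hr
    rw [hφ_def]
    exact div_pos (hψ'pos r hr) (hψpos r hr)
  have hNpos : (0:ℝ) < (N:ℝ) - 1 := by
    have : (2:ℝ) ≤ (N:ℝ) := by exact_mod_cast hN
    linarith
  have hode' : ∀ r > (0:ℝ), deriv (deriv u) r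
      = -(((N:ℝ)-1) * φ r * deriv u r + Real.exp (u r)) := by
    intro r hr
    have := hode r hr
    rw [hφ_def]
    simp only
    linarith
  -- the auxiliary function w = ψ^(N-1) u'
  set w : ℝ → ℝ := fun r => ψ r ^ (N-1) * deriv u r with hw_def
  have hwhas : ∀ r > (0:ℝ), HasDerivAt w (-(ψ r ^ (N-1) * Real.exp (u r))) r := by
    intro r hr
    have h1 : HasDerivAt (fun s => ψ s ^ (N-1))
        ((((N-1) : ℕ):ℝ) * ψ r ^ (N-1-1) * deriv ψ r) r := ((hψ1 r hr).hasDerivAt).pow (N-1)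
    have h2 : HasDerivAt (deriv u) (deriv (deriv u) r) r := (hu2 r hr).hasDerivAt
    have h3 : HasDerivAt (fun y => ψ y ^ (N-1) * deriv u y)
        ((((N-1) : ℕ):ℝ) * ψ r ^ (N-1-1) * deriv ψ r * deriv u r
          + ψ r ^ (N-1) * deriv (deriv u) r) r := h1.mul h2
    rw [hw_def]
    convert h3 using 1
    rw [hode' r hr]
    have hcast : (((N-1):ℕ):ℝ) = (N:ℝ) - 1 := by
      rw [Nat.cast_sub (by omega : 1 ≤ N), Nat.cast_one]
    have hpow : ψ r ^ (N-1) = ψ r ^ (N-1-1) * ψ r := by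
      rw [← pow_succ]
      congr 1
      omega
    rw [hcast, hpow, hφ_def]
    simp only
    field_simp [ne_of_gt (hψpos r hr)]
    ring
  -- eventual negativity of u'
  obtain ⟨s₀, hs₀1, hneg⟩ : ∃ s₀ ≥ (1:ℝ), ∀ r ≥ s₀, deriv u r < 0 := by
    by_cases hex : ∃ s ≥ (1:ℝ), deriv u s < 0
    · obtain ⟨s, hs1, hsneg⟩ := hex
      refine ⟨s+1, by linarith, fun r hr => ?_⟩
      have hanti : StrictAntiOn w (Ici s) := by
        apply strictAntiOn_of_deriv_neg (convex_Ici s)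
        · intro σ hσ
          have hσ0 : (0:ℝ) < σ := by
            have := mem_Ici.mp hσ; linarith
          exact (hwhas σ hσ0).differentiableAt.continuousAt.continuousWithinAt
        · intro σ hσ
          rw [interior_Ici] at hσ
          have hσ0 : (0:ℝ) < σ := by
            have := mem_Ioi.mp hσ; linarith
          rw [(hwhas σ hσ0).deriv]
          have h1 := pow_pos (hψpos σ hσ0) (N-1)
          have h2 := Real.exp_pos (u σ)
          nlinarith
      have hws : w s < 0 := by
        rw [hw_def]
        exact mul_neg_of_pos_of_neg (pow_pos (hψpos s (by linarith)) _) hsneg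
      have hwr : w r < w s :=
        hanti (mem_Ici.mpr le_rfl) (mem_Ici.mpr (by linarith)) (by linarith)
      have hp := pow_pos (hψpos r (by linarith : (0:ℝ) < r)) (N-1)
      by_contra hcon
      push_neg at hcon
      have : 0 ≤ w r := by
        rw [hw_def]
        exact mul_nonneg hp.le hcon
      linarith
    · push_neg at hex
      exfalso
      have humono : MonotoneOn u (Ici 1) := by
        apply monotoneOn_of_deriv_nonneg (convex_Ici 1)
        · intro σ hσ
          exact (hu1 σ (by have := mem_Ici.mp hσ; linarith)).continuousAt.continuousWithinAt
        · intro σ hσ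
          rw [interior_Ici] at hσ
          exact (hu1 σ (by have := mem_Ioi.mp hσ; linarith)).differentiableWithinAt
        · intro σ hσ
          rw [interior_Ici] at hσ
          exact hex σ (mem_Ioi.mp hσ).le
      have hψmono : MonotoneOn ψ (Ici 1) := by
        apply monotoneOn_of_deriv_nonneg (convex_Ici 1)
        · intro σ hσ
          exact (hψ1 σ (by have := mem_Ici.mp hσ; linarith)).continuousAt.continuousWithinAt
        · intro σ hσ
          rw [interior_Ici] at hσ
          exact (hψ1 σ (by have := mem_Ioi.mp hσ; linarith)).differentiableWithinAt
        · intro σ hσ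
          rw [interior_Ici] at hσ
          exact (hψ'pos σ (by have := mem_Ioi.mp hσ; linarith)).le
      set c := ψ 1 ^ (N-1) * Real.exp (u 1) with hc_def
      have hc : 0 < c := mul_pos (pow_pos (hψpos 1 one_pos) _) (Real.exp_pos _)
      have hdec := lin_decay (h := w) (c := c) (s := 1)
        (fun r hr => (hwhas r (by have := mem_Ici.mp hr; linarith)).differentiableAt)
        (fun r hr => by
          have hr1 : (1:ℝ) < r := mem_Ioi.mp hr
          rw [(hwhas r (by linarith)).deriv]
          have h1 : ψ 1 ≤ ψ r := hψmono (mem_Ici.mpr le_rfl) (mem_Ici.mpr hr1.le) hr1.le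
          have h2 : u 1 ≤ u r := humono (mem_Ici.mpr le_rfl) (mem_Ici.mpr hr1.le) hr1.le
          have h3 : ψ 1 ^ (N-1) ≤ ψ r ^ (N-1) :=
            pow_le_pow_left₀ (hψpos 1 one_pos).le h1 _
          have h4 : Real.exp (u 1) ≤ Real.exp (u r) := Real.exp_le_exp.mpr h2
          have h5 : c ≤ ψ r ^ (N-1) * Real.exp (u r) := by
            rw [hc_def]
            exact mul_le_mul h3 h4 (Real.exp_pos _).le (pow_pos (hψpos r (by linarith)) _).le
          linarith)
      set t := 1 + w 1 / c + 1 with ht_def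
      have hw1 : 0 ≤ w 1 := by
        rw [hw_def]
        exact mul_nonneg (pow_pos (hψpos 1 one_pos) _).le (hex 1 le_rfl)
      have hdiv : 0 ≤ w 1 / c := div_nonneg hw1 hc.le
      have ht1 : (1:ℝ) ≤ t := by rw [ht_def]; linarith
      have hwt : 0 ≤ w t := by
        rw [hw_def]
        exact mul_nonneg (pow_pos (hψpos t (by linarith)) _).le (hex t ht1)
      have hdect := hdec t ht1
      have hcc : c * (w 1 / c) = w 1 := mul_div_cancel₀ _ (ne_of_gt hc)
      have htm : t - 1 = w 1 / c + 1 := by rw [ht_def]; ring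
      have hct : c * (t - 1) = w 1 + c := by rw [htm, mul_add, hcc, mul_one]
      linarith
  have hs₀0 : (0:ℝ) < s₀ := by linarith
  -- u is decreasing beyond s₀
  have huanti : AntitoneOn u (Ici s₀) := by
    apply antitoneOn_of_deriv_nonpos (convex_Ici s₀)
    · intro σ hσ
      exact (hu1 σ (by have := mem_Ici.mp hσ; linarith)).continuousAt.continuousWithinAt
    · intro σ hσ
      rw [interior_Ici] at hσ
      exact (hu1 σ (by have := mem_Ioi.mp hσ; linarith)).differentiableWithinAt
    · intro σ hσ
      rw [interior_Ici] at hσ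
      exact (hneg σ (mem_Ioi.mp hσ).le).le
  set K := Real.exp (u s₀) with hK_def
  have hK : ∀ r ≥ s₀, Real.exp (u r) ≤ K := by
    intro r hr
    exact Real.exp_le_exp.mpr (huanti (mem_Ici.mpr le_rfl) (mem_Ici.mpr hr) hr)
  -- the limit ℓ of exp (u r)
  set E : ℝ → ℝ := fun r => Real.exp (u r) with hE_def
  have hEanti : Antitone (fun r => E (max r s₀)) := by
    intro a b hab
    simp only [hE_def]
    exact Real.exp_le_exp.mpr (huanti (mem_Ici.mpr (le_max_right a s₀))
      (mem_Ici.mpr (le_max_right b s₀)) (max_le_max hab le_rfl))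
  have hEbdd : BddBelow (range (fun r => E (max r s₀))) := by
    refine ⟨0, ?_⟩
    rintro y ⟨r, rfl⟩
    exact (Real.exp_pos _).le
  set ℓ := ⨅ r, E (max r s₀) with hℓ_def
  have hEtend : Tendsto E atTop (nhds ℓ) := by
    apply Tendsto.congr' _ (tendsto_atTop_ciInf hEanti hEbdd)
    filter_upwards [eventually_ge_atTop s₀] with r hr
    rw [max_eq_left hr]
  have hl0 : 0 ≤ ℓ := by
    rw [hℓ_def]
    exact le_ciInf (fun r => (Real.exp_pos _).le)
  have hEge : ∀ r ≥ s₀, ℓ ≤ E r := by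
    intro r hr
    have := ciInf_le hEbdd r
    rwa [max_eq_left hr] at this
  -- the function R = -exp(u)/u'
  set R : ℝ → ℝ := fun r => -(Real.exp (u r) / deriv u r) with hR_def
  have hRpos : ∀ r ≥ s₀, 0 < R r := by
    intro r hr
    rw [hR_def]
    exact neg_pos.mpr (div_neg_of_pos_of_neg (Real.exp_pos _) (hneg r hr))
  have hRhas : ∀ r ≥ s₀, HasDerivAt R
      (R r * (deriv u r + ((N:ℝ)-1) * φ r - R r)) r := by
    intro r hr
    have hr0 : (0:ℝ) < r := by linarith
    have hu' := hneg r hr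
    have hne : deriv u r ≠ 0 := ne_of_lt hu'
    have h1 : HasDerivAt (fun s => Real.exp (u s)) (Real.exp (u r) * deriv u r) r :=
      (hu1 r hr0).hasDerivAt.exp
    have h2 : HasDerivAt (deriv u) (deriv (deriv u) r) r := (hu2 r hr0).hasDerivAt
    have h3 : HasDerivAt (fun s => -(Real.exp (u s) / deriv u s))
        (-((Real.exp (u r) * deriv u r * deriv u r - Real.exp (u r) * deriv (deriv u) r)
          / (deriv u r)^2)) r := (h1.div h2 hne).neg
    rw [hR_def]
    convert h3 using 1
    rw [hode' r hr0]
    simp only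
    field_simp
    ring
  -- the target function agrees eventually with -(N-1) + R/φ
  have hFeq : ∀ᶠ r in atTop, (deriv (deriv u) r / deriv u r) * (ψ r / deriv ψ r)
      = -((N:ℝ)-1) + R r * (φ r)⁻¹ := by
    filter_upwards [eventually_ge_atTop s₀] with r hr
    have hr0 : (0:ℝ) < r := by linarith
    have hu' := hneg r hr
    have hψr := hψpos r hr0
    have hψ'r := hψ'pos r hr0
    rw [hode' r hr0, hR_def, hφ_def]
    simp only
    field_simp [ne_of_gt hψr, ne_of_gt hψ'r, ne_of_lt hu']
    ring
  refine ⟨0, ?_⟩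
  have key : Tendsto (fun r => (deriv (deriv u) r / deriv u r) * (ψ r / deriv ψ r))
      atTop (nhds 0) := by
    by_cases htopc : Λ = ⊤
    · -- infinite case
      have htop : Tendsto φ atTop atTop := by
        rw [htopc] at hA3
        rw [EReal.tendsto_nhds_top_iff_real] at hA3
        rw [hφ_def, tendsto_atTop]
        intro b
        filter_upwards [hA3 b] with r hr
        exact_mod_cast hr.le
      have hu'0t : Tendsto (deriv u) atTop (nhds 0) := by
        rw [Metric.tendsto_nhds]
        intro ε hε
        have hbar : ∀ᶠ r in atTop, -(ε/2) ≤ deriv u r := by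
          apply barrier_ge one_pos
          have he2 : (0:ℝ) < ε/2 := by linarith
          have hD : (0:ℝ) < ((N:ℝ)-1) * (ε/2) := by positivity
          have hφbig := htop.eventually_ge_atTop ((K+1)/(((N:ℝ)-1) * (ε/2)))
          filter_upwards [hφbig, eventually_ge_atTop s₀] with r hφr hrs
          have hr0 : (0:ℝ) < r := by linarith
          refine ⟨hu2 r hr0, fun hle => ?_⟩
          rw [hode' r hr0]
          have hφp := hφpos r hr0
          have k1 : K + 1 ≤ ((N:ℝ)-1) * (ε/2) * φ r := by
            have := (div_le_iff₀ hD).mp hφr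
            linarith [mul_comm (φ r) (((N:ℝ)-1)*(ε/2))]
          have k2 : ((N:ℝ)-1) * φ r * deriv u r ≤ ((N:ℝ)-1) * φ r * (-(ε/2)) :=
            mul_le_mul_of_nonneg_left hle (by positivity)
          have k3 : Real.exp (u r) ≤ K := hK r hrs
          have k4 : ((N:ℝ)-1) * φ r * (-(ε/2)) = -(((N:ℝ)-1) * (ε/2) * φ r) := by ring
          linarith
        filter_upwards [hbar, eventually_ge_atTop s₀] with r h1 h2
        rw [Real.dist_eq, sub_zero, abs_lt]
        exact ⟨by linarith, by linarith [hneg r h2]⟩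
      obtain ⟨C, hC⟩ := hA4 htopc
      set G : ℝ → ℝ := deriv (fun s => Real.log (deriv ψ s / ψ s)) with hG_def
      have hGval : ∀ r > (0:ℝ), deriv φ r = G r * φ r := by
        intro r hr0
        have hlog : HasDerivAt (fun s => Real.log (deriv ψ s / ψ s)) (deriv φ r / φ r) r :=
          (hφd r hr0).hasDerivAt.log (ne_of_gt (hφpos r hr0))
        rw [hG_def, hlog.deriv, div_mul_cancel₀ _ (ne_of_gt (hφpos r hr0))]
      have h0 : Tendsto (fun r => (deriv u r - G r) / φ r) atTop (nhds 0) := by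
        apply squeeze_zero_norm' (a := fun r => (1+C) * (φ r)⁻¹)
        · have hu'small : ∀ᶠ r in atTop, |deriv u r| ≤ 1 := by
            have := Metric.tendsto_nhds.mp hu'0t 1 one_pos
            filter_upwards [this] with r hr
            rw [Real.dist_eq, sub_zero] at hr
            exact hr.le
          filter_upwards [hu'small, hC, htop.eventually_ge_atTop 1] with r h1 h2 h3
          have hφp : (0:ℝ) < φ r := by linarith
          rw [Real.norm_eq_abs, abs_div, abs_of_pos hφp, div_eq_mul_inv]
          have hnum : |deriv u r - G r| ≤ 1 + C := by
            calc |deriv u r - G r| ≤ |deriv u r| + |G r| := abs_sub _ _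
            _ ≤ 1 + C := add_le_add h1 h2
          exact mul_le_mul_of_nonneg_right hnum (inv_nonneg.mpr hφp.le)
        · have h5 : Tendsto (fun r => (φ r)⁻¹) atTop (nhds 0) := htop.inv_tendsto_atTop
          have h6 := h5.const_mul (1+C)
          simpa using h6
      have hβtend : Tendsto (fun r => ((N:ℝ)-1) + (deriv u r - G r) / φ r)
          atTop (nhds ((N:ℝ)-1)) := by
        have := (tendsto_const_nhds (x := ((N:ℝ)-1))).add h0
        simpa using this
      set P : ℝ → ℝ := fun r => R r / φ r with hP_def
      have hPtend : Tendsto P atTop (nhds ((N:ℝ)-1)) := by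
        apply engine (m := φ) hNpos ?_ hβtend
        filter_upwards [eventually_ge_atTop s₀, htop.eventually_ge_atTop 1] with r hrs hφ1
        have hr0 : (0:ℝ) < r := by linarith
        have hφp := hφpos r hr0
        have hφne := ne_of_gt hφp
        have hPhas : HasDerivAt P
            ((R r * (deriv u r + ((N:ℝ)-1) * φ r - R r) * φ r - R r * deriv φ r)
              / (φ r)^2) r := by
          rw [hP_def]
          exact (hRhas r hrs).div (hφd r hr0).hasDerivAt hφne
        refine ⟨hPhas.differentiableAt, div_pos (hRpos r hrs) hφp, hφ1, ?_⟩
        rw [hPhas.deriv, hGval r hr0, hP_def]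
        simp only
        field_simp
        ring
      have hQ : Tendsto (fun r => -((N:ℝ)-1) + R r * (φ r)⁻¹) atTop (nhds 0) := by
        have h2 : Tendsto (fun r => -((N:ℝ)-1) + P r) atTop
            (nhds (-((N:ℝ)-1) + ((N:ℝ)-1))) := (tendsto_const_nhds).add hPtend
        have h3 : -((N:ℝ)-1) + ((N:ℝ)-1) = 0 := by ring
        rw [h3] at h2
        apply h2.congr
        intro r
        rw [hP_def]
        simp only [div_eq_mul_inv]
      exact Tendsto.congr' (hFeq.mono fun _ hr => hr.symm) hQ
    · -- finite case
      have hbot : Λ ≠ ⊥ := by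
        intro h
        rw [h] at hΛpos
        exact absurd hΛpos (by simp)
      obtain ⟨l, rfl⟩ : ∃ l : ℝ, Λ = (l:EReal) := by
        lift Λ to ℝ using ⟨htopc, hbot⟩
        exact ⟨Λ, rfl⟩
      have hl : (0:ℝ) < l := by exact_mod_cast hΛpos
      have hφl : Tendsto φ atTop (nhds l) := by
        rw [hφ_def]
        exact EReal.tendsto_coe.mp hA3
      have hA := mul_pos hNpos hl
      have hl2 : Tendsto (fun r => ((N:ℝ)-1) * φ r) atTop (nhds (((N:ℝ)-1)*l)) :=
        hφl.const_mul _
      have hℓ0 : ℓ = 0 := by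
        by_contra hne
        have hlpos : 0 < ℓ := lt_of_le_of_ne hl0 (Ne.symm hne)
        set δ := ℓ / (2*(((N:ℝ)-1)*l+1)) with hδ_def
        have hδpos : 0 < δ := by rw [hδ_def]; positivity
        have hbar : ∀ᶠ r in atTop, deriv u r ≤ -δ := by
          apply barrier_le (c := ℓ/2) (by positivity)
          have hφub : ∀ᶠ r in atTop, ((N:ℝ)-1) * φ r < ((N:ℝ)-1)*l + 1 :=
            hl2.eventually (gt_mem_nhds (lt_add_one _))
          filter_upwards [hφub, eventually_ge_atTop s₀] with r hφr hrs
          have hr0 : (0:ℝ) < r := by linarith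
          refine ⟨hu2 r hr0, fun hge => ?_⟩
          rw [hode' r hr0]
          have hEr : ℓ ≤ Real.exp (u r) := hEge r hrs
          have hφp := hφpos r hr0
          have k1 : (((N:ℝ)-1) * φ r) * (-δ) ≤ ((N:ℝ)-1) * φ r * deriv u r :=
            mul_le_mul_of_nonneg_left hge (by positivity)
          have k2 : (((N:ℝ)-1) * φ r) * δ ≤ (((N:ℝ)-1)*l + 1) * δ :=
            mul_le_mul_of_nonneg_right hφr.le hδpos.le
          have k3 : (((N:ℝ)-1)*l + 1) * δ = ℓ/2 := by
            rw [hδ_def]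
            field_simp
          have k4 : (((N:ℝ)-1) * φ r) * (-δ) = -((((N:ℝ)-1) * φ r) * δ) := by ring
          linarith
        obtain ⟨r3, hr3⟩ := eventually_atTop.mp (hbar.and (eventually_ge_atTop s₀))
        have hdec := lin_decay (h := u) (c := δ) (s := r3)
          (fun r hr => hu1 r (lt_of_lt_of_le hs₀0 (hr3 r hr).2))
          (fun r hr => (hr3 r (le_of_lt hr)).1)
        set t := max r3 (r3 + (u r3 - Real.log ℓ + 1)/δ) with hT
        have htr3 : r3 ≤ t := le_max_left _ _
        have ht2 : r3 + (u r3 - Real.log ℓ + 1)/δ ≤ t := le_max_right _ _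
        have h1 := hdec t htr3
        have hut : u t ≤ Real.log ℓ - 1 := by
          have h2 : (u r3 - Real.log ℓ + 1)/δ ≤ t - r3 := by linarith
          have h3 := mul_le_mul_of_nonneg_left h2 hδpos.le
          have h4 : δ * ((u r3 - Real.log ℓ + 1)/δ) = u r3 - Real.log ℓ + 1 := by
            field_simp
          linarith
        have hEt : Real.exp (u t) < ℓ := by
          calc Real.exp (u t) ≤ Real.exp (Real.log ℓ - 1) := Real.exp_le_exp.mpr hut
          _ < Real.exp (Real.log ℓ) := Real.exp_lt_exp.mpr (by linarith)
          _ = ℓ := Real.exp_log hlpos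
        have hle2 : ℓ ≤ Real.exp (u t) := hEge t (le_trans (hr3 r3 le_rfl).2 htr3)
        linarith
      have hE0 : Tendsto E atTop (nhds 0) := hℓ0 ▸ hEtend
      have hu'0t : Tendsto (deriv u) atTop (nhds 0) := by
        rw [Metric.tendsto_nhds]
        intro ε hε
        have hbar : ∀ᶠ r in atTop, -(ε/2) ≤ deriv u r := by
          apply barrier_ge (c := (((N:ℝ)-1)*l/2) * (ε/2) / 2) (by positivity)
          have h1 : ∀ᶠ r in atTop, ((N:ℝ)-1)*l/2 < ((N:ℝ)-1) * φ r :=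
            hl2.eventually (lt_mem_nhds (by linarith))
          have h2 : ∀ᶠ r in atTop, Real.exp (u r) < (((N:ℝ)-1)*l/2) * (ε/2) / 2 :=
            hE0.eventually (gt_mem_nhds (by positivity))
          filter_upwards [h1, h2, eventually_ge_atTop s₀] with r k1 k2 hrs
          have hr0 : (0:ℝ) < r := by linarith
          refine ⟨hu2 r hr0, fun hle => ?_⟩
          rw [hode' r hr0]
          have hφp := hφpos r hr0
          have k3 : ((N:ℝ)-1) * φ r * deriv u r ≤ ((N:ℝ)-1) * φ r * (-(ε/2)) :=
            mul_le_mul_of_nonneg_left hle (by positivity)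
          have k4 : ((N:ℝ)-1) * φ r * (-(ε/2)) ≤ (((N:ℝ)-1)*l/2) * (-(ε/2)) :=
            mul_le_mul_of_nonpos_right k1.le (by linarith)
          have k5 : (((N:ℝ)-1)*l/2) * (-(ε/2)) = -((((N:ℝ)-1)*l/2) * (ε/2)) := by ring
          linarith
        filter_upwards [hbar, eventually_ge_atTop s₀] with r h1 h2
        rw [Real.dist_eq, sub_zero, abs_lt]
        exact ⟨by linarith, by linarith [hneg r h2]⟩
      have hRtend : Tendsto R atTop (nhds (((N:ℝ)-1)*l)) := by
        apply engine (m := fun _ => (1:ℝ)) (β := fun r => deriv u r + ((N:ℝ)-1) * φ r) hA ?_ ?_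
        · filter_upwards [eventually_ge_atTop s₀] with r hr
          refine ⟨(hRhas r hr).differentiableAt, hRpos r hr, le_rfl, ?_⟩
          rw [(hRhas r hr).deriv]
          ring
        · have := hu'0t.add hl2
          simpa using this
      have hQ : Tendsto (fun r => -((N:ℝ)-1) + R r * (φ r)⁻¹) atTop (nhds 0) := by
        have h2 : Tendsto (fun r => R r * (φ r)⁻¹) atTop (nhds ((((N:ℝ)-1)*l) * l⁻¹)) :=
          hRtend.mul (hφl.inv₀ (ne_of_gt hl))
        have h4 := (tendsto_const_nhds (x := -((N:ℝ)-1))).add h2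
        have h3 : -((N:ℝ)-1) + (((N:ℝ)-1)*l) * l⁻¹ = 0 := by field_simp; ring
        rw [h3] at h4
        exact h4
      exact Tendsto.congr' (hFeq.mono fun _ hr => hr.symm) hQ
  have := (EReal.tendsto_coe
    (m := fun r => (deriv (deriv u) r / deriv u r) * (ψ r / deriv ψ r)) (a := (0:ℝ))).mpr key
  simpa using this
end

section
/- If the solution u of the initial value problem satisfies u(r) → −∞ as r → +∞, then (u''(r)/u'(r))·(ψ(r)/ψ'(r)) → 0 as r → +∞. -/
open Set Real Filter MeasureTheory intervalIntegral Topology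

set_option maxHeartbeats 1000000

section aux


lemma ode_tendsto (X f b : ℝ → ℝ) (r₀ L c : ℝ) (hc : 0 < c)
    (hbc : Continuous b)
    (hbge : ∀ r, c ≤ b r)
    (hX : ∀ r ∈ Ici r₀, HasDerivAt X (f r - b r * X r) r)
    (hL : Tendsto (fun r => f r / b r) atTop (nhds L)) :
    Tendsto X atTop (nhds L) := by
  set B : ℝ → ℝ := fun r => ∫ t in r₀..r, b t with hBdef
  have hB : ∀ r, HasDerivAt B (b r) r := fun r =>
    (integral_hasDerivAt_right (hbc.intervalIntegrable _ _)
      (hbc.stronglyMeasurableAtFilter _ _) hbc.continuousAt)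
  have hB0 : B r₀ = 0 := by simp [hBdef]
  -- B grows at least linearly
  have hBlin : ∀ r ∈ Ici r₀, c * (r - r₀) ≤ B r := by
    intro r hr
    have hm : MonotoneOn (fun r => B r - c * (r - r₀)) (Ici r₀) := by
      apply monotoneOn_of_deriv_nonneg (convex_Ici r₀)
      · exact (fun x _ => ((hB x).continuousAt.sub (by fun_prop)).continuousWithinAt)
      · intro x hx
        exact (((hB x).sub (((hasDerivAt_id x).sub_const r₀).const_mul c)).differentiableAt).differentiableWithinAt
      · intro x hx
        have : deriv (fun r => B r - c * (r - r₀)) x = b x - c := by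
          have := ((hB x).sub (((hasDerivAt_id x).sub_const r₀).const_mul c))
          have hd : deriv (fun r => B r - c * (r - r₀)) x = _ := this.deriv
          simpa using hd
        rw [this]; linarith [hbge x]
    have := hm (self_mem_Ici) hr hr
    simp only [hB0] at this
    linarith [this]
  have hBtop : Tendsto B atTop atTop := by
    apply tendsto_atTop_mono' atTop (f₁ := fun r => c * (r - r₀))
    · filter_upwards [eventually_ge_atTop r₀] with r hr using hBlin r hr
    · exact (tendsto_atTop_add_const_right _ _ tendsto_id |>.const_mul_atTop hc)
  set φ : ℝ → ℝ := fun r => Real.exp (B r) * (X r - L) with hφdef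
  have hφ : ∀ r ∈ Ici r₀, HasDerivAt φ (Real.exp (B r) * (f r - b r * L)) r := by
    intro r hr
    have h1 : HasDerivAt φ _ r := ((hB r).exp.mul ((hX r hr).sub_const L))
    convert h1 using 1
    ring
  rw [Metric.tendsto_nhds]
  intro ε hε
  set ε' : ℝ := ε / 2 with hε'def
  have hε' : 0 < ε' := by positivity
  have hev : ∀ᶠ r in atTop, |f r / b r - L| < ε' ∧ r₀ ≤ r := by
    filter_upwards [hL (Metric.ball_mem_nhds L hε'), eventually_ge_atTop r₀] with r h1 h2
    exact ⟨by simpa [Real.dist_eq] using h1, h2⟩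
  obtain ⟨r₁, hr₁⟩ := hev.exists_forall_of_atTop
  have hr₁0 : r₀ ≤ r₁ := (hr₁ r₁ le_rfl).2
  have hbnd : ∀ r, r₁ ≤ r → |f r - b r * L| ≤ ε' * b r := by
    intro r hr
    have hbr : (0:ℝ) < b r := lt_of_lt_of_le hc (hbge r)
    have h1 := (hr₁ r hr).1
    have : f r - b r * L = b r * (f r / b r - L) := by field_simp
    rw [this, abs_mul, abs_of_pos hbr]
    nlinarith [abs_nonneg (f r / b r - L)]
  -- monotone bounds for φ on Ici r₁
  have hmono : ∀ s : ℝ, s = 1 ∨ s = -1 →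
      MonotoneOn (fun r => ε' * Real.exp (B r) + s * φ r) (Ici r₁) := by
    intro s hs
    apply monotoneOn_of_deriv_nonneg (convex_Ici r₁)
    · intro x hx
      exact (((hB x).exp.const_mul ε').add
        ((hφ x (le_trans hr₁0 hx)).const_mul s)).continuousAt.continuousWithinAt
    · intro x hx
      rw [interior_Ici] at hx
      exact (((hB x).exp.const_mul ε').add
        ((hφ x (le_trans hr₁0 (le_of_lt hx))).const_mul s)).differentiableAt.differentiableWithinAt
    · intro x hx
      rw [interior_Ici] at hx
      have hd : deriv (fun r => ε' * Real.exp (B r) + s * φ r) x = _ := (((hB x).exp.const_mul ε').add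
        ((hφ x (le_trans hr₁0 (le_of_lt hx))).const_mul s)).deriv
      rw [hd]
      have h1 := hbnd x (le_of_lt hx)
      have h2 : |s * (f x - b x * L)| ≤ ε' * b x := by
        rcases hs with h | h <;> rw [h] <;> [simpa using h1; (rw [neg_one_mul, abs_neg]; exact h1)]
      have h3 := neg_abs_le (s * (f x - b x * L))
      have hex : (0:ℝ) < Real.exp (B x) := Real.exp_pos _
      nlinarith [hex]
  have hφbnd : ∀ r, r₁ ≤ r → |φ r| ≤ |φ r₁| + ε' * Real.exp (B r) := by
    intro r hr
    have h1 := hmono 1 (Or.inl rfl) self_mem_Ici hr hr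
    have h2 := hmono (-1) (Or.inr rfl) self_mem_Ici hr hr
    simp only [one_mul, neg_one_mul] at h1 h2
    have he1 : (0:ℝ) < Real.exp (B r₁) := Real.exp_pos _
    rw [abs_le]
    constructor <;> cases' abs_le.1 (le_refl |φ r₁|) with hl hu <;>
      nlinarith [le_abs_self (φ r₁), neg_abs_le (φ r₁)]
  have hexp0 : Tendsto (fun r => Real.exp (-B r)) atTop (nhds 0) :=
    Real.tendsto_exp_atBot.comp (tendsto_neg_atTop_atBot.comp hBtop)
  have hsmall : ∀ᶠ r in atTop, |φ r₁| * Real.exp (-B r) < ε' := by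
    have := hexp0.const_mul (|φ r₁|)
    rw [mul_zero] at this
    have hlt := this.eventually_lt_const hε'
    simpa using hlt
  filter_upwards [hsmall, eventually_ge_atTop r₁] with r h1 h2
  have hXr : X r - L = φ r * Real.exp (-B r) := by
    rw [hφdef]
    simp only []
    rw [Real.exp_neg]
    field_simp
  rw [Real.dist_eq, hXr]
  have := hφbnd r h2
  have he : (0:ℝ) < Real.exp (-B r) := Real.exp_pos _
  have he2 : Real.exp (-B r) * Real.exp (B r) = 1 := by
    rw [← Real.exp_add]; simp
  rw [abs_mul, abs_of_pos he]
  calc |φ r| * Real.exp (-B r) ≤ (|φ r₁| + ε' * Real.exp (B r)) * Real.exp (-B r) := by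
        apply mul_le_mul_of_nonneg_right this (le_of_lt he)
    _ = |φ r₁| * Real.exp (-B r) + ε' * (Real.exp (B r) * Real.exp (-B r)) := by ring
    _ < ε' + ε' * 1 := by
        rw [← Real.exp_add]
        simp only [add_neg_cancel, Real.exp_zero]
        linarith
    _ = ε := by rw [hε'def]; ring

lemma ode_tendsto' (X f b : ℝ → ℝ) (r₀ L c : ℝ) (hc : 0 < c)
    (hbc : ContinuousOn b (Ici r₀))
    (hbge : ∀ r ∈ Ici r₀, c ≤ b r)
    (hX : ∀ r ∈ Ici r₀, HasDerivAt X (f r - b r * X r) r)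
    (hL : Tendsto (fun r => f r / b r) atTop (nhds L)) :
    Tendsto X atTop (nhds L) := by
  have hmax : ∀ r : ℝ, max r r₀ ∈ Ici r₀ := fun r => mem_Ici.2 (le_max_right _ _)
  have hbc' : Continuous (fun r => b (max r r₀)) :=
    hbc.comp_continuous (continuous_id.max continuous_const) hmax
  have hbge' : ∀ r, c ≤ b (max r r₀) := fun r => hbge _ (hmax r)
  have hX' : ∀ r ∈ Ici r₀, HasDerivAt X (f (max r r₀) - b (max r r₀) * X r) r := by
    intro r hr
    rw [max_eq_left (mem_Ici.1 hr)]
    exact hX r hr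
  have hL' : Tendsto (fun r => f (max r r₀) / b (max r r₀)) atTop (nhds L) := by
    apply hL.congr'
    filter_upwards [eventually_ge_atTop r₀] with r hr
    rw [max_eq_left hr]
  exact ode_tendsto X _ _ r₀ L c hc hbc' hbge' hX' hL'

end aux

theorem statement5 (N : ℕ) (hN : 2 ≤ N) (ψ : ℝ → ℝ)
    (hψC2 : ContDiffOn ℝ 2 ψ (Ici 0))
    (hψpos : ∀ r > (0:ℝ), ψ r > 0)
    (hψ0 : ψ 0 = 0) (hψ''0 : deriv (deriv ψ) 0 = 0) (hψ'0 : deriv ψ 0 = 1)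
    (hψ'pos : ∀ r > (0:ℝ), deriv ψ r > 0)
    (Λ : EReal) (hΛpos : 0 < Λ)
    (hA3 : Filter.Tendsto (fun r => ((deriv ψ r / ψ r : ℝ) : EReal)) Filter.atTop (nhds Λ))
    (hA4 : Λ = ⊤ → ∃ C : ℝ, ∀ᶠ r in Filter.atTop,
      |deriv (fun s => Real.log (deriv ψ s / ψ s)) r| ≤ C)
    (α : ℝ) (u : ℝ → ℝ)
    (huC2 : ContDiffOn ℝ 2 u (Ici 0)) (hu0 : u 0 = α) (hu'0 : deriv u 0 = 0)
    (hode : ∀ r > (0:ℝ), deriv (deriv u) r + ((N : ℝ) - 1) * (deriv ψ r / ψ r) * deriv u r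
      + Real.exp (u r) = 0)
    (hdiv : Tendsto u atTop atBot)
    : Tendsto (fun r => (deriv (deriv u) r / deriv u r) * (ψ r / deriv ψ r))
        atTop (nhds 0) := by
  have hN1 : (1:ℝ) ≤ (N:ℝ) - 1 := by
    have : (2:ℝ) ≤ (N:ℝ) := by exact_mod_cast hN
    linarith
  -- regularity
  have hop : ∀ r : ℝ, 0 < r → Ici (0:ℝ) ∈ 𝓝 r := fun r hr =>
    mem_of_superset (isOpen_Ioi.mem_nhds hr) Ioi_subset_Ici_self
  have huD1 : ContDiffOn ℝ 1 (deriv u) (Ioi 0) := by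
    exact (huC2.mono (Ioi_subset_Ici_self)).deriv_of_isOpen isOpen_Ioi (by norm_num)
  have hψD1 : ContDiffOn ℝ 1 (deriv ψ) (Ioi 0) := by
    exact (hψC2.mono (Ioi_subset_Ici_self)).deriv_of_isOpen isOpen_Ioi (by norm_num)
  have hu'has : ∀ r ∈ Ioi (0:ℝ), HasDerivAt u (deriv u r) r := by
    intro r hr
    exact (((huC2.contDiffAt (hop r hr)).differentiableAt (by norm_num))).hasDerivAt
  have hψ'has : ∀ r ∈ Ioi (0:ℝ), HasDerivAt ψ (deriv ψ r) r := by
    intro r hr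
    exact (((hψC2.contDiffAt (hop r hr)).differentiableAt (by norm_num))).hasDerivAt
  have hu''has : ∀ r ∈ Ioi (0:ℝ), HasDerivAt (deriv u) (deriv (deriv u) r) r := by
    intro r hr
    exact ((huD1.differentiableOn one_ne_zero).differentiableAt
      (isOpen_Ioi.mem_nhds hr)).hasDerivAt
  have hψ''has : ∀ r ∈ Ioi (0:ℝ), HasDerivAt (deriv ψ) (deriv (deriv ψ) r) r := by
    intro r hr
    exact ((hψD1.differentiableOn one_ne_zero).differentiableAt
      (isOpen_Ioi.mem_nhds hr)).hasDerivAt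
  have hu'c : ContinuousOn (deriv u) (Ioi 0) := huD1.continuousOn
  have hψ'c : ContinuousOn (deriv ψ) (Ioi 0) := hψD1.continuousOn
  have hψ''c : ContinuousOn (deriv (deriv ψ)) (Ioi 0) :=
    hψD1.continuousOn_deriv_of_isOpen isOpen_Ioi le_rfl
  have huc : ContinuousOn u (Ioi 0) := (huC2.continuousOn).mono Ioi_subset_Ici_self
  have hψcon : ContinuousOn ψ (Ioi 0) := (hψC2.continuousOn).mono Ioi_subset_Ici_self
  have hqc : ContinuousOn (fun r => deriv ψ r / ψ r) (Ioi 0) :=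
    hψ'c.div hψcon (fun x hx => ne_of_gt (hψpos x hx))
  have hqpos : ∀ r ∈ Ioi (0:ℝ), 0 < deriv ψ r / ψ r := fun r hr =>
    div_pos (hψ'pos r hr) (hψpos r hr)
  -- eventual lower bound on q
  have hc0 : ∃ c : ℝ, 0 < c ∧ ∀ᶠ r in atTop, c < deriv ψ r / ψ r := by
    obtain ⟨x, hx0, hxΛ⟩ := exists_between hΛpos
    have hxtop : x ≠ ⊤ := ne_top_of_lt hxΛ
    have hxbot : x ≠ ⊥ := ne_bot_of_gt hx0
    lift x to ℝ using ⟨hxtop, hxbot⟩ with c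
    refine ⟨c, by exact_mod_cast hx0, ?_⟩
    filter_upwards [hA3 (Ioi_mem_nhds hxΛ)] with r hr
    have : (c : EReal) < ((deriv ψ r / ψ r : ℝ) : EReal) := hr
    exact_mod_cast this
  -- u' < 0 on (0,∞)
  have hu'neg : ∀ r ∈ Ioi (0:ℝ), deriv u r < 0 := by
    have hUc : ContinuousOn (derivWithin u (Ici 0)) (Ici 0) :=
      huC2.continuousOn_derivWithin (uniqueDiffOn_Ici 0) (by norm_num)
    have hUeq : ∀ r ∈ Ioi (0:ℝ), derivWithin u (Ici 0) r = deriv u r := fun r hr =>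
      derivWithin_of_mem_nhds (hop r hr)
    set g : ℝ → ℝ := fun r => ψ r ^ (N-1) * derivWithin u (Ici 0) r with hgdef
    have hgc : ContinuousOn g (Ici 0) :=
      ((hψC2.continuousOn).pow _).mul hUc
    have hg0 : g 0 = 0 := by
      simp [hgdef, hψ0, zero_pow (show N - 1 ≠ 0 by omega)]
    have hganti : StrictAntiOn g (Ici 0) := by
      apply strictAntiOn_of_deriv_neg (convex_Ici 0) hgc
      intro x hx
      rw [interior_Ici] at hx
      have hx0 : (0:ℝ) < x := hx
      have hGd : HasDerivAt (fun r => ψ r ^ (N-1) * deriv u r)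
          ((↑(N-1) * ψ x ^ (N-1-1) * deriv ψ x) * deriv u x
            + ψ x ^ (N-1) * deriv (deriv u) x) x :=
        ((hψ'has x hx).pow (N-1)).mul (hu''has x hx)
      have hfeq : g =ᶠ[𝓝 x] (fun r => ψ r ^ (N-1) * deriv u r) := by
        filter_upwards [isOpen_Ioi.mem_nhds hx] with y hy
        rw [hgdef]; simp only []; rw [hUeq y hy]
      have hgd : HasDerivAt g
          ((↑(N-1) * ψ x ^ (N-1-1) * deriv ψ x) * deriv u x
            + ψ x ^ (N-1) * deriv (deriv u) x) x := hGd.congr_of_eventuallyEq hfeq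
      rw [hgd.deriv]
      have hψx : 0 < ψ x := hψpos x hx
      have hode' : deriv (deriv u) x = -(((N:ℝ)-1) * (deriv ψ x / ψ x) * deriv u x)
          - Real.exp (u x) := by linarith [hode x hx]
      have hkey : ψ x ^ (N-1-1) * ψ x = ψ x ^ (N-1) := by
        rw [← pow_succ]; congr 1; omega
      have hcast : (↑(N-1) : ℝ) = (N:ℝ) - 1 := by
        have : (1:ℕ) ≤ N := by omega
        push_cast [this]; ring
      rw [hode', hcast]
      have hexp : 0 < Real.exp (u x) := Real.exp_pos _
      have hpow : 0 < ψ x ^ (N-1) := pow_pos hψx _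
      have : ((N:ℝ)-1) * ψ x ^ (N-1-1) * deriv ψ x * deriv u x
          + ψ x ^ (N-1) * (-(((N:ℝ)-1) * (deriv ψ x / ψ x) * deriv u x) - Real.exp (u x))
          = - (ψ x ^ (N-1) * Real.exp (u x)) := by
        field_simp
        rw [← hkey]; ring
      rw [this]
      nlinarith
    intro r hr
    have := hganti self_mem_Ici (le_of_lt (show (0:ℝ) < r from hr)) hr
    rw [hg0, hgdef] at this
    simp only [] at this
    rw [hUeq r hr] at this
    have hpow : 0 < ψ r ^ (N-1) := pow_pos (hψpos r hr) _
    nlinarith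
  -- exp u → 0
  have hexpu : Tendsto (fun r => Real.exp (u r)) atTop (nhds 0) :=
    Real.tendsto_exp_atBot.comp hdiv
  -- energy: u' → 0
  have hv0 : Tendsto (fun r => deriv u r) atTop (nhds 0) := by
    set E : ℝ → ℝ := fun r => (deriv u r)^2/2 + Real.exp (u r) with hEdef
    have hE' : ∀ r ∈ Ioi (0:ℝ), HasDerivAt E
        (-((((N:ℝ)-1) * (deriv ψ r / ψ r)) * (deriv u r)^2)) r := by
      intro r hr
      have h1 : HasDerivAt E ((2 * deriv u r ^ 1 * deriv (deriv u) r)/2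
          + Real.exp (u r) * deriv u r) r :=
        (((hu''has r hr).pow 2).div_const 2).add ((hu'has r hr).exp)
      convert h1 using 1
      have hode' : deriv (deriv u) r = -(((N:ℝ)-1) * (deriv ψ r / ψ r) * deriv u r)
          - Real.exp (u r) := by linarith [hode r hr]
      rw [hode']; ring
    have hEnn : ∀ r : ℝ, 0 ≤ E r := by
      intro r; rw [hEdef]; positivity
    have hEanti : AntitoneOn E (Ioi 0) := by
      apply antitoneOn_of_deriv_nonpos (convex_Ioi 0)
      · exact fun x hx => (hE' x hx).continuousAt.continuousWithinAt
      · intro x hx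
        rw [interior_Ioi] at hx
        exact (hE' x hx).differentiableAt.differentiableWithinAt
      · intro x hx
        rw [interior_Ioi] at hx
        rw [(hE' x hx).deriv]
        have hq := hqpos x hx
        nlinarith [sq_nonneg (deriv u x), mul_nonneg hq.le (sq_nonneg (deriv u x))]
    set EE : ℝ → ℝ := fun r => E (max r 1) with hEEdef
    have hEEanti : Antitone EE := by
      intro a b hab
      exact hEanti (by simp : max a 1 ∈ Ioi (0:ℝ)) (by simp : max b 1 ∈ Ioi (0:ℝ))
        (max_le_max hab le_rfl)
    have hEEbdd : BddBelow (range EE) := ⟨0, fun y hy => by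
      obtain ⟨r, rfl⟩ := hy; exact hEnn _⟩
    have hEEl : Tendsto EE atTop (nhds (⨅ r, EE r)) := tendsto_atTop_ciInf hEEanti hEEbdd
    set l : ℝ := ⨅ r, EE r with hldef
    have hEeq : E =ᶠ[atTop] EE := by
      filter_upwards [eventually_ge_atTop (1:ℝ)] with r hr
      rw [hEEdef]; simp only []; rw [max_eq_left hr]
    have hEl : Tendsto E atTop (nhds l) := hEEl.congr' hEeq.symm
    have hl0 : 0 ≤ l := ge_of_tendsto hEl (Eventually.of_forall hEnn)
    have hv2 : Tendsto (fun r => (deriv u r)^2) atTop (nhds (2*l)) := by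
      have := (hEl.sub hexpu).const_mul 2
      rw [sub_zero] at this
      apply this.congr
      intro r; rw [hEdef]; ring
    have hl : l = 0 := by
      by_contra h
      have hlpos : 0 < l := lt_of_le_of_ne hl0 (Ne.symm h)
      obtain ⟨c, hc, hcq⟩ := hc0
      have hev : ∀ᶠ r in atTop, l < (deriv u r)^2 ∧ c < deriv ψ r / ψ r ∧ 1 ≤ r := by
        filter_upwards [hv2.eventually_const_lt (by linarith : l < 2*l), hcq,
          eventually_ge_atTop (1:ℝ)] with r h1 h2 h3
        exact ⟨h1, h2, h3⟩
      obtain ⟨r₁, hr₁⟩ := hev.exists_forall_of_atTop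
      have hlin : ∀ x : ℝ, HasDerivAt (fun r : ℝ => (c*l)*r) (c*l) x := by
        intro x
        simpa using (hasDerivAt_id x).const_mul (c*l)
      have hanti2 : AntitoneOn (fun r => E r + (c*l)*r) (Ici r₁) := by
        apply antitoneOn_of_deriv_nonpos (convex_Ici r₁)
        · intro x hx
          have hx0 : (0:ℝ) < x := lt_of_lt_of_le (by linarith [(hr₁ r₁ le_rfl).2.2]) hx
          exact ((hE' x hx0).add (hlin x)).continuousAt.continuousWithinAt
        · intro x hx
          rw [interior_Ici] at hx
          have hx0 : (0:ℝ) < x := lt_of_lt_of_le (by linarith [(hr₁ r₁ le_rfl).2.2]) (le_of_lt hx)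
          exact ((hE' x hx0).add (hlin x)).differentiableAt.differentiableWithinAt
        · intro x hx
          rw [interior_Ici] at hx
          have hx0 : (0:ℝ) < x := lt_of_lt_of_le (by linarith [(hr₁ r₁ le_rfl).2.2]) (le_of_lt hx)
          have hd : deriv (fun r => E r + c*l*r) x = _ := ((hE' x hx0).add (hlin x)).deriv
          rw [hd]
          obtain ⟨h1, h2, _⟩ := hr₁ x (le_of_lt hx)
          have hqx : 0 < deriv ψ x / ψ x := lt_trans hc h2
          nlinarith [mul_nonneg (sub_nonneg.2 h2.le) (sub_nonneg.2 h1.le),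
            mul_nonneg hqx.le (sq_nonneg (deriv u x)), mul_pos hc hlpos,
            mul_le_mul_of_nonneg_left h1.le hc.le,
            mul_le_mul_of_nonneg_right h2.le hlpos.le]
      have hcl : 0 < c * l := mul_pos hc hlpos
      set R : ℝ := max r₁ ((E r₁ + c*l*r₁ + 1)/(c*l)) with hRdef
      have h1 : E R + c*l*R ≤ E r₁ + c*l*r₁ :=
        hanti2 self_mem_Ici (mem_Ici.2 (le_max_left _ _)) (le_max_left _ _)
      have h2 : (E r₁ + c*l*r₁ + 1)/(c*l) ≤ R := le_max_right _ _
      have h3 : E r₁ + c*l*r₁ + 1 ≤ c*l*R := by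
        rw [div_le_iff₀ hcl] at h2; linarith
      linarith [hEnn R]
    rw [hl, mul_zero] at hv2
    rw [tendsto_zero_iff_abs_tendsto_zero]
    have : Tendsto (fun r => Real.sqrt ((deriv u r)^2)) atTop (nhds 0) := by
      have := (Real.continuous_sqrt.tendsto 0).comp hv2
      simpa [Function.comp_def] using this
    apply this.congr
    intro r
    rw [Real.sqrt_sq_eq_abs]
    rfl
  -- sigma derivative
  have hσhas : ∀ r ∈ Ioi (0:ℝ), HasDerivAt (fun s => -(deriv u s) * Real.exp (-(u s)))
      (1 - (((N:ℝ)-1) * (deriv ψ r / ψ r) + deriv u r) *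
        (-(deriv u r) * Real.exp (-(u r)))) r := by
    intro r hr
    have h1 : HasDerivAt (fun s => -(deriv u s) * Real.exp (-(u s)))
        (-(deriv (deriv u) r) * Real.exp (-(u r))
          + -(deriv u r) * (Real.exp (-(u r)) * -(deriv u r))) r :=
      ((hu''has r hr).neg).mul (((hu'has r hr).neg).exp)
    convert h1 using 1
    have hode' : deriv (deriv u) r = -(((N:ℝ)-1) * (deriv ψ r / ψ r) * deriv u r)
        - Real.exp (u r) := by linarith [hode r hr]
    rw [hode', Real.exp_neg]
    have he : Real.exp (u r) ≠ 0 := ne_of_gt (Real.exp_pos _)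
    field_simp
    ring
  -- main convergence: rho → 1/(N-1)
  have hρ : Tendsto (fun r => (-(deriv u r) * Real.exp (-(u r))) * (deriv ψ r / ψ r))
      atTop (nhds (((N:ℝ)-1)⁻¹)) := by
    have hN1' : ((N:ℝ)-1) ≠ 0 := by linarith
    by_cases hΛtop : Λ = ⊤
    · -- infinite case
      obtain ⟨C, hC⟩ := hA4 hΛtop
      have hC0 : 0 ≤ C := by
        obtain ⟨r, hr⟩ := hC.exists
        exact le_trans (abs_nonneg _) hr
      have hqtop : Tendsto (fun r => deriv ψ r / ψ r) atTop atTop := by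
        rw [tendsto_atTop]
        intro x
        rw [hΛtop, EReal.tendsto_nhds_top_iff_real] at hA3
        filter_upwards [hA3 x] with r hr
        exact le_of_lt (by exact_mod_cast hr)
      set qd : ℝ → ℝ := fun r =>
        (deriv (deriv ψ) r * ψ r - deriv ψ r * deriv ψ r) / (ψ r)^2 with hqddef
      have hqhas : ∀ r ∈ Ioi (0:ℝ), HasDerivAt (fun s => deriv ψ s / ψ s) (qd r) r :=
        fun r hr => (hψ''has r hr).div (hψ'has r hr) (ne_of_gt (hψpos r hr))
      have hqdc : ContinuousOn qd (Ioi 0) :=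
        ((hψ''c.mul hψcon).sub (hψ'c.mul hψ'c)).div (hψcon.pow 2)
          (fun x hx => pow_ne_zero 2 (ne_of_gt (hψpos x hx)))
      have hlogd : ∀ᶠ r in atTop, |qd r / (deriv ψ r / ψ r)| ≤ C := by
        filter_upwards [hC, eventually_gt_atTop (0:ℝ)] with r hr hr0
        have : deriv (fun s => Real.log (deriv ψ s / ψ s)) r
            = qd r / (deriv ψ r / ψ r) :=
          ((hqhas r hr0).log (ne_of_gt (hqpos r hr0))).deriv
        rwa [this] at hr
      set b : ℝ → ℝ := fun r => (((N:ℝ)-1) * (deriv ψ r / ψ r) + deriv u r)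
        - qd r / (deriv ψ r / ψ r) with hbdef
      have hXhas : ∀ r ∈ Ioi (0:ℝ),
          HasDerivAt (fun s => (-(deriv u s) * Real.exp (-(u s))) * (deriv ψ s / ψ s))
            ((deriv ψ r / ψ r) - b r
              * ((-(deriv u r) * Real.exp (-(u r))) * (deriv ψ r / ψ r))) r := by
        intro r hr
        have h1 : HasDerivAt (fun s => (-(deriv u s) * Real.exp (-(u s))) * (deriv ψ s / ψ s)) _ r :=
          (hσhas r hr).mul (hqhas r hr)
        convert h1 using 1
        have hq0 : deriv ψ r / ψ r ≠ 0 := ne_of_gt (hqpos r hr)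
        rw [hbdef]
        linear_combination (-(deriv u r) * Real.exp (-(u r)))
          * (div_mul_cancel₀ (qd r) hq0)
      have hev : ∀ᶠ r in atTop, (1:ℝ) ≤ b r ∧ 0 < r := by
        filter_upwards [hqtop.eventually_ge_atTop (C+3), hlogd,
          (Metric.tendsto_nhds.1 hv0) 1 one_pos, eventually_gt_atTop (0:ℝ)]
          with r h1 h2 h3 h4
        refine ⟨?_, h4⟩
        rw [Real.dist_eq, sub_zero] at h3
        have ha := abs_le.1 h2
        have hb := abs_lt.1 h3
        have hq0 : 0 < deriv ψ r / ψ r := by linarith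
        rw [hbdef]
        have : deriv ψ r / ψ r ≤ ((N:ℝ)-1) * (deriv ψ r / ψ r) := by nlinarith
        linarith
      obtain ⟨r₀, hr₀⟩ := hev.exists_forall_of_atTop
      have hr₀0 : 0 < r₀ := (hr₀ r₀ le_rfl).2
      have hsub : Ici r₀ ⊆ Ioi (0:ℝ) := fun x hx => lt_of_lt_of_le hr₀0 hx
      have hbc : ContinuousOn b (Ici r₀) := by
        apply ContinuousOn.mono _ hsub
        exact ((continuousOn_const.mul hqc).add hu'c).sub
          (hqdc.div hqc (fun x hx => ne_of_gt (hqpos x hx)))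
      -- limit of q/b
      have hinv : Tendsto (fun r => (deriv ψ r / ψ r)⁻¹) atTop (nhds 0) :=
        tendsto_inv_atTop_zero.comp hqtop
      have h1 : Tendsto (fun r => deriv u r * (deriv ψ r / ψ r)⁻¹) atTop (nhds 0) := by
        have := hv0.mul hinv
        simpa using this
      have h2 : Tendsto (fun r => (qd r / (deriv ψ r / ψ r)) * (deriv ψ r / ψ r)⁻¹)
          atTop (nhds 0) := by
        have hg : Tendsto (fun r => C * (deriv ψ r / ψ r)⁻¹) atTop (nhds 0) := by
          have := hinv.const_mul C
          rwa [mul_zero] at this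
        apply squeeze_zero_norm' _ hg
        filter_upwards [hlogd, hqtop.eventually_gt_atTop 0] with r ha hq
        rw [Real.norm_eq_abs, abs_mul, abs_inv, abs_of_pos hq]
        exact mul_le_mul_of_nonneg_right ha (le_of_lt (inv_pos.2 hq))
      have hbq : Tendsto (fun r => b r / (deriv ψ r / ψ r)) atTop (nhds ((N:ℝ)-1)) := by
        have h3 := (tendsto_const_nhds (x := ((N:ℝ)-1)) (f := atTop)).add (h1.sub h2)
        rw [sub_zero, add_zero] at h3
        apply h3.congr'
        filter_upwards [hqtop.eventually_gt_atTop 0, eventually_gt_atTop (0:ℝ)] with r hq hr0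
        have hq0 : deriv ψ r / ψ r ≠ 0 := ne_of_gt hq
        have hn1 : ψ r ≠ 0 := ne_of_gt (hψpos r hr0)
        have hn2 : deriv ψ r ≠ 0 := ne_of_gt (hψ'pos r hr0)
        rw [hbdef]
        field_simp
        ring
      have hqb : Tendsto (fun r => (deriv ψ r / ψ r) / b r) atTop (nhds (((N:ℝ)-1)⁻¹)) := by
        have := hbq.inv₀ hN1'
        apply this.congr
        intro r
        rw [inv_div]
      exact ode_tendsto' _ _ b r₀ _ 1 one_pos hbc
        (fun r hr => (hr₀ r hr).1)
        (fun r hr => hXhas r (hsub hr)) hqb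
    · -- finite case
      have hΛbot : Λ ≠ ⊥ := ne_bot_of_gt hΛpos
      lift Λ to ℝ using ⟨hΛtop, hΛbot⟩ with L
      have hLpos : (0:ℝ) < L := by exact_mod_cast hΛpos
      have hqL : Tendsto (fun r => deriv ψ r / ψ r) atTop (nhds L) :=
        EReal.tendsto_coe.1 hA3
      set b : ℝ → ℝ := fun r => ((N:ℝ)-1) * (deriv ψ r / ψ r) + deriv u r with hbdef
      have hbL : Tendsto b atTop (nhds (((N:ℝ)-1)*L)) := by
        have := (hqL.const_mul ((N:ℝ)-1)).add hv0
        simpa using this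
      have hNL : 0 < ((N:ℝ)-1)*L := by nlinarith
      have hev : ∀ᶠ r in atTop, ((N:ℝ)-1)*L/2 ≤ b r ∧ 0 < r := by
        filter_upwards [hbL.eventually_const_lt (by linarith : ((N:ℝ)-1)*L/2 < ((N:ℝ)-1)*L),
          eventually_gt_atTop (0:ℝ)] with r hh1 hh2
        exact ⟨le_of_lt hh1, hh2⟩
      obtain ⟨r₀, hr₀⟩ := hev.exists_forall_of_atTop
      have hr₀0 : 0 < r₀ := (hr₀ r₀ le_rfl).2
      have hsub : Ici r₀ ⊆ Ioi (0:ℝ) := fun x hx => lt_of_lt_of_le hr₀0 hx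
      have hbc : ContinuousOn b (Ici r₀) :=
        (((continuousOn_const.mul hqc).add hu'c)).mono hsub
      have hLb : Tendsto (fun r => (fun _ : ℝ => (1:ℝ)) r / b r) atTop
          (nhds ((((N:ℝ)-1)*L)⁻¹)) := by
        have := hbL.inv₀ (ne_of_gt hNL)
        simpa [one_div] using this
      have hσlim : Tendsto (fun s => -(deriv u s) * Real.exp (-(u s))) atTop
          (nhds ((((N:ℝ)-1)*L)⁻¹)) := by
        apply ode_tendsto' _ _ b r₀ _ (((N:ℝ)-1)*L/2) (by linarith) hbc
          (fun r hr => (hr₀ r hr).1) _ hLb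
        intro r hr
        exact hσhas r (hsub hr)
      have := hσlim.mul hqL
      rw [show (((N:ℝ)-1)*L)⁻¹ * L = ((N:ℝ)-1)⁻¹ by field_simp] at this
      exact this
  -- conclusion
  have hN1' : ((N:ℝ)-1) ≠ 0 := by linarith
  have hfin : ∀ᶠ r in atTop, (deriv (deriv u) r / deriv u r) * (ψ r / deriv ψ r)
      = -((N:ℝ)-1) + ((-(deriv u r) * Real.exp (-(u r))) * (deriv ψ r / ψ r))⁻¹ := by
    filter_upwards [eventually_gt_atTop (0:ℝ)] with r hr
    have hψr := hψpos r hr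
    have hψ'r := hψ'pos r hr
    have hu'r := hu'neg r hr
    have hode' : deriv (deriv u) r = -(((N:ℝ)-1) * (deriv ψ r / ψ r) * deriv u r)
        - Real.exp (u r) := by linarith [hode r hr]
    have h1 : deriv u r ≠ 0 := ne_of_lt hu'r
    have h2 : ψ r ≠ 0 := ne_of_gt hψr
    have h3 : deriv ψ r ≠ 0 := ne_of_gt hψ'r
    have h4 : Real.exp (u r) ≠ 0 := ne_of_gt (Real.exp_pos _)
    rw [hode', Real.exp_neg]
    field_simp
    ring
  have hlim : Tendsto (fun r => -((N:ℝ)-1)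
      + ((-(deriv u r) * Real.exp (-(u r))) * (deriv ψ r / ψ r))⁻¹) atTop (nhds 0) := by
    have h1 := hρ.inv₀ (inv_ne_zero hN1')
    rw [inv_inv] at h1
    have h2 := (tendsto_const_nhds (x := -((N:ℝ)-1)) (f := atTop)).add h1
    rw [neg_add_cancel] at h2
    exact h2
  exact Tendsto.congr' (hfin.mono fun r hr => hr.symm) hlim
end

section
/- If the function r ↦ ψ(r)/ψ'(r) is integrable on (0, +∞), then the solution u of the initial value problem converges, as r → +∞, to a finite limit belonging to (−∞, α). -/
open Set Real Filter MeasureTheory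
open Topology

set_option maxHeartbeats 2000000 in
theorem statement7 (N : ℕ) (hN : 2 ≤ N) (ψ : ℝ → ℝ)
    (hψC2 : ContDiffOn ℝ 2 ψ (Ici 0))
    (hψpos : ∀ r > (0:ℝ), ψ r > 0)
    (hψ0 : ψ 0 = 0) (hψ''0 : deriv (deriv ψ) 0 = 0) (hψ'0 : deriv ψ 0 = 1)
    (hψ'pos : ∀ r > (0:ℝ), deriv ψ r > 0)
    (Λ : EReal) (hΛpos : 0 < Λ)
    (hA3 : Filter.Tendsto (fun r => ((deriv ψ r / ψ r : ℝ) : EReal)) Filter.atTop (nhds Λ))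
    (hA4 : Λ = ⊤ → ∃ C : ℝ, ∀ᶠ r in Filter.atTop,
      |deriv (fun s => Real.log (deriv ψ s / ψ s)) r| ≤ C)
    (α : ℝ) (u : ℝ → ℝ)
    (huC2 : ContDiffOn ℝ 2 u (Ici 0)) (hu0 : u 0 = α) (hu'0 : deriv u 0 = 0)
    (hode : ∀ r > (0:ℝ), deriv (deriv u) r + ((N : ℝ) - 1) * (deriv ψ r / ψ r) * deriv u r
      + Real.exp (u r) = 0)
    (hint : IntegrableOn (fun r => ψ r / deriv ψ r) (Ioi (0:ℝ)))
    : ∃ l : ℝ, l < α ∧ Tendsto u atTop (nhds l) := by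
  -- ## Regularity
  have huO : ContDiffOn ℝ 2 u (Ioi 0) := huC2.mono Ioi_subset_Ici_self
  have hψO : ContDiffOn ℝ 2 ψ (Ioi 0) := hψC2.mono Ioi_subset_Ici_self
  have hvO : ContDiffOn ℝ 1 (deriv u) (Ioi 0) :=
    huO.deriv_of_isOpen isOpen_Ioi (by norm_num)
  have hψ'O : ContDiffOn ℝ 1 (deriv ψ) (Ioi 0) :=
    hψO.deriv_of_isOpen isOpen_Ioi (by norm_num)
  have hud : ∀ r > (0:ℝ), HasDerivAt u (deriv u r) r := by
    intro r hr
    exact ((huO.differentiableOn (by norm_num)).differentiableAt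
      (isOpen_Ioi.mem_nhds hr)).hasDerivAt
  have hvd : ∀ r > (0:ℝ), HasDerivAt (deriv u) (deriv (deriv u) r) r := by
    intro r hr
    exact ((hvO.differentiableOn (by norm_num)).differentiableAt
      (isOpen_Ioi.mem_nhds hr)).hasDerivAt
  have hψd : ∀ r > (0:ℝ), HasDerivAt ψ (deriv ψ r) r := by
    intro r hr
    exact ((hψO.differentiableOn (by norm_num)).differentiableAt
      (isOpen_Ioi.mem_nhds hr)).hasDerivAt
  have hψ'dd : ∀ r > (0:ℝ), DifferentiableAt ℝ (deriv ψ) r := by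
    intro r hr
    exact (hψ'O.differentiableOn (by norm_num)).differentiableAt
      (isOpen_Ioi.mem_nhds hr)
  -- ## Notation
  set v : ℝ → ℝ := deriv u with hv_def
  set g : ℝ → ℝ := fun r => deriv ψ r / ψ r with hg_def
  set P : ℝ → ℝ := fun r => ψ r ^ (N - 1) with hP_def
  set w : ℝ → ℝ := fun r => P r * v r with hw_def
  have hPpos : ∀ r > (0:ℝ), 0 < P r := fun r hr => pow_pos (hψpos r hr) _
  have hgpos : ∀ r > (0:ℝ), 0 < g r := fun r hr =>
    div_pos (hψ'pos r hr) (hψpos r hr)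
  have hgd : ∀ r > (0:ℝ), DifferentiableAt ℝ g r := by
    intro r hr
    exact (hψ'dd r hr).div (hψd r hr).differentiableAt (hψpos r hr).ne'
  have hPd : ∀ r > (0:ℝ), HasDerivAt P (((N:ℝ) - 1) * ψ r ^ (N - 2) * deriv ψ r) r := by
    intro r hr
    have := (hψd r hr).pow (N - 1)
    have hc : ((N - 1 : ℕ) : ℝ) = (N : ℝ) - 1 := by
      have : (1:ℕ) ≤ N := by omega
      push_cast [this]; ring
    have he : N - 1 - 1 = N - 2 := by omega
    rw [he, hc] at this
    exact this
  -- derivative of w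
  have hwd : ∀ r > (0:ℝ), HasDerivAt w (-(P r * Real.exp (u r))) r := by
    intro r hr
    have h1 := (hPd r hr).mul (hvd r hr)
    have hode' := hode r hr
    have hψr := hψpos r hr
    have key : ((N:ℝ) - 1) * ψ r ^ (N - 2) * deriv ψ r * v r + P r * deriv (deriv u) r
        = -(P r * Real.exp (u r)) := by
      have hP2 : P r = ψ r ^ (N - 2) * ψ r := by
        have h21 : N - 1 = (N - 2) + 1 := by omega
        simp only [hP_def]
        rw [h21, pow_succ]
      have hdd : deriv (deriv u) r
          = -(((N : ℝ) - 1) * (deriv ψ r / ψ r) * v r + Real.exp (u r)) := by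
        rw [hv_def]; linarith [hode']
      rw [hdd, hP2]
      field_simp
      ring
    rw [← key]
    exact h1
  -- w is strictly antitone on (0, ∞)
  have hwcont : ContinuousOn w (Ioi 0) := by
    intro x hx
    exact ((hwd x hx).differentiableAt.continuousAt).continuousWithinAt
  have hwanti : StrictAntiOn w (Ioi 0) := by
    apply strictAntiOn_of_deriv_neg (convex_Ioi 0) hwcont
    intro x hx
    rw [interior_Ioi] at hx
    rw [(hwd x hx).deriv]
    nlinarith [hPpos x hx, Real.exp_pos (u x)]
  -- w tends to 0 at 0⁺
  have hwlim : Tendsto w (𝓝[>] (0:ℝ)) (𝓝 0) := by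
    have hVcont : ContinuousOn (derivWithin u (Ici 0)) (Ici 0) :=
      huC2.continuousOn_derivWithin (uniqueDiffOn_Ici 0) (by norm_num)
    have hPcont : ContinuousOn P (Ici 0) := (hψC2.continuousOn).pow _
    have h1 : Tendsto (fun t => P t * derivWithin u (Ici 0) t) (𝓝[>] (0:ℝ))
        (𝓝 (P 0 * derivWithin u (Ici 0) 0)) := by
      have := (hPcont 0 (self_mem_Ici)).mul (hVcont 0 (self_mem_Ici))
      exact this.tendsto.mono_left (nhdsWithin_mono 0 Ioi_subset_Ici_self)
    have hP0 : P 0 = 0 := by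
      rw [hP_def]; simp only [hψ0]
      exact zero_pow (by omega)
    rw [hP0, zero_mul] at h1
    refine h1.congr' ?_
    filter_upwards [self_mem_nhdsWithin] with t ht
    rw [hw_def, hv_def, derivWithin_of_mem_nhds (Ici_mem_nhds ht)]
  -- v < 0 on (0, ∞)
  have hwneg : ∀ r > (0:ℝ), w r < 0 := by
    intro r hr
    have h2 : w (r/2) ≤ 0 := by
      refine ge_of_tendsto hwlim ?_
      filter_upwards [Ioo_mem_nhdsGT_of_mem (Set.mem_Ico.2 ⟨le_refl (0:ℝ), show (0:ℝ) < r/2 by linarith⟩)] with t ht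
      exact (hwanti ht.1 (mem_Ioi.mpr (show (0:ℝ) < r/2 by linarith)) ht.2).le
    calc w r < w (r/2) := hwanti (mem_Ioi.mpr (show (0:ℝ) < r/2 by linarith)) (mem_Ioi.2 hr) (by linarith)
    _ ≤ 0 := h2
  have hvneg : ∀ r > (0:ℝ), v r < 0 := by
    intro r hr
    have := hwneg r hr
    simp only [hw_def] at this
    nlinarith [hPpos r hr]
  -- u is strictly decreasing on [0, ∞), hence u ≤ α and exp (u r) ≤ exp α
  have huanti : StrictAntiOn u (Ici 0) := by
    apply strictAntiOn_of_deriv_neg (convex_Ici 0) huC2.continuousOn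
    intro x hx
    rw [interior_Ici] at hx
    exact hvneg x hx
  have hua : ∀ r ≥ (0:ℝ), u r ≤ α := by
    intro r hr
    rcases eq_or_lt_of_le hr with h | h
    · rw [← h, hu0]
    · rw [← hu0]; exact (huanti self_mem_Ici (le_of_lt h) h).le
  -- ## Λ = ⊤
  have hΛtop : Λ = ⊤ := by
    induction Λ using EReal.rec with
    | top => rfl
    | bot => exact absurd hΛpos (by simp)
    | coe c =>
      exfalso
      have hc : (0:ℝ) < c := by exact_mod_cast hΛpos
      have hgc : Tendsto g atTop (𝓝 c) := by rwa [EReal.tendsto_coe] at hA3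
      have hinv : Tendsto (fun r => ψ r / deriv ψ r) atTop (𝓝 c⁻¹) := by
        refine (hgc.inv₀ hc.ne').congr' ?_
        filter_upwards [eventually_gt_atTop (0:ℝ)] with r hr
        have h1 := hψpos r hr
        have h2 := hψ'pos r hr
        simp only [hg_def]
        rw [inv_div]
      have hev : ∀ᶠ r in atTop, c⁻¹/2 < ψ r / deriv ψ r :=
        hinv.eventually (eventually_gt_nhds (by nlinarith [inv_pos.2 hc]))
      obtain ⟨R, hR⟩ := eventually_atTop.1 hev
      have hsub : Ioi (max R 0) ⊆ Ioi (0:ℝ) := Ioi_subset_Ioi (le_max_right _ _)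
      have hR' : IntegrableOn (fun r => ψ r / deriv ψ r) (Ioi (max R 0)) :=
        hint.mono_set hsub
      have hconst : Integrable (fun _ : ℝ => c⁻¹/2) (volume.restrict (Ioi (max R 0))) := by
        apply Integrable.mono' hR' aestronglyMeasurable_const
        filter_upwards [ae_restrict_mem measurableSet_Ioi] with x hx
        rw [Real.norm_eq_abs, abs_of_pos (by positivity)]
        exact (hR x (le_trans (le_max_left R 0) (le_of_lt hx))).le
      rw [integrable_const_iff] at hconst
      rcases hconst with hc0 | hfin
      · have : (0:ℝ) < c⁻¹/2 := by positivity
        rw [hc0] at this; exact lt_irrefl 0 this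
      · rw [isFiniteMeasure_restrict, ← lt_top_iff_ne_top, Real.volume_Ioi] at hfin
        exact (lt_irrefl _ hfin)
  -- g → ∞
  have hgtop : Tendsto g atTop atTop := by
    rw [hΛtop] at hA3
    rw [EReal.tendsto_nhds_top_iff_real] at hA3
    rw [tendsto_atTop]
    intro b
    filter_upwards [hA3 b] with x hx
    exact_mod_cast hx.le
  -- ## the key estimate
  obtain ⟨C, hC⟩ := hA4 hΛtop
  set C' : ℝ := |C| + 1 with hC'
  have hC'pos : 0 < C' := by positivity
  have hev : ∀ᶠ r in atTop, ((1:ℝ) ≤ g r ∧ 2*C' ≤ g r) ∧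
      |deriv (fun s => Real.log (deriv ψ s / ψ s)) r| ≤ C :=
    ((hgtop.eventually_ge_atTop 1).and (hgtop.eventually_ge_atTop (2*C'))).and hC
  obtain ⟨R₀', hR₀'⟩ := eventually_atTop.1 hev
  set R₀ : ℝ := max R₀' 1 with hR₀def
  have hR₀pos : (0:ℝ) < R₀ := lt_of_lt_of_le one_pos (le_max_right _ _)
  have hcond : ∀ r ≥ R₀, 1 ≤ g r ∧ 2*C' ≤ g r ∧ |deriv g r / g r| ≤ C' := by
    intro r hr
    have hrpos : (0:ℝ) < r := lt_of_lt_of_le hR₀pos hr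
    obtain ⟨⟨h1, h2⟩, h3⟩ := hR₀' r (le_trans (le_max_left _ _) hr)
    refine ⟨h1, h2, ?_⟩
    have hlog : HasDerivAt (fun s => Real.log (deriv ψ s / ψ s)) (deriv g r / g r) r :=
      ((hgd r hrpos).hasDerivAt).log (hgpos r hrpos).ne'
    rw [hlog.deriv] at h3
    refine h3.trans ?_
    rw [hC']
    nlinarith [le_abs_self C, abs_nonneg C]
  -- exp (u r) ≤ exp α
  have heu : ∀ r > (0:ℝ), Real.exp (u r) ≤ Real.exp α :=
    fun r hr => Real.exp_le_exp.2 (hua r hr.le)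
  -- the comparison function h = ψ^(N-1)/g = ψ^N/ψ'
  set h : ℝ → ℝ := fun r => P r / g r with hh_def
  have hhd : ∀ r > (0:ℝ), HasDerivAt h
      (P r * ((((N:ℝ) - 1) - (deriv g r / g r) / g r))) r := by
    intro r hrpos
    have hψr := hψpos r hrpos
    have hψ'r := hψ'pos r hrpos
    have hgr := hgpos r hrpos
    have hdiv := (hPd r hrpos).div ((hgd r hrpos).hasDerivAt) hgr.ne'
    refine HasDerivAt.congr_deriv hdiv ?_
    have h21 : N - 1 = (N - 2) + 1 := by omega
    have hP2 : P r = ψ r ^ (N - 2) * ψ r := by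
      simp only [hP_def]; rw [h21, pow_succ]
    rw [hP2]
    simp only [hg_def]
    field_simp
  -- S = w + 2 e^α h is monotone on [R₀, ∞)
  set S : ℝ → ℝ := fun r => w r + (2 * Real.exp α) * h r with hS_def
  have hSd : ∀ r ≥ R₀, HasDerivAt S
      (-(P r * Real.exp (u r)) + (2 * Real.exp α) *
        (P r * ((((N:ℝ) - 1) - (deriv g r / g r) / g r)))) r := by
    intro r hr
    have hrpos : (0:ℝ) < r := lt_of_lt_of_le hR₀pos hr
    exact (hwd r hrpos).add ((hhd r hrpos).const_mul (2 * Real.exp α))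
  have hSmono : MonotoneOn S (Ici R₀) := by
    apply monotoneOn_of_deriv_nonneg (convex_Ici R₀)
    · intro x hx
      exact ((hSd x hx).differentiableAt.continuousAt).continuousWithinAt
    · intro x hx
      rw [interior_Ici] at hx
      exact (hSd x hx.le).differentiableAt.differentiableWithinAt
    · intro x hx
      rw [interior_Ici] at hx
      have hxR : R₀ ≤ x := hx.le
      have hxpos : (0:ℝ) < x := lt_of_lt_of_le hR₀pos hxR
      rw [(hSd x hxR).deriv]
      obtain ⟨h1, h2, h3⟩ := hcond x hxR
      have hgx : 0 < g x := hgpos x hxpos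
      have hq : (deriv g x / g x) / g x ≤ 1/2 := by
        have h4 : deriv g x / g x ≤ C' := (le_abs_self _).trans h3
        have e1 : (deriv g x / g x) / g x ≤ C' / g x := (div_le_div_iff_of_pos_right hgx).2 h4
        have e2 : C' / g x ≤ 1/2 := by rw [div_le_iff₀ hgx]; linarith
        linarith
      have hNb : (1:ℝ) ≤ (N:ℝ) - 1 := by
        have : (2:ℝ) ≤ (N:ℝ) := by exact_mod_cast hN
        linarith
      have hP := hPpos x hxpos
      have he := heu x hxpos
      have key : Real.exp (u x) ≤ 2 * Real.exp α * ((((N:ℝ) - 1) - (deriv g x / g x) / g x)) := by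
        have h5 : (1:ℝ)/2 ≤ ((N:ℝ) - 1) - (deriv g x / g x) / g x := by linarith
        calc Real.exp (u x) ≤ Real.exp α := he
        _ = 2 * Real.exp α * (1/2) := by ring
        _ ≤ _ := by nlinarith [Real.exp_pos α]
      nlinarith [mul_le_mul_of_nonneg_left key hP.le]
  -- lower bound for w on [R₀, ∞)
  have hwlower : ∀ r ≥ R₀, w R₀ - (2 * Real.exp α) * h r ≤ w r := by
    intro r hr
    have hrpos : (0:ℝ) < r := lt_of_lt_of_le hR₀pos hr
    have hm := hSmono self_mem_Ici (mem_Ici.mpr hr) hr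
    simp only [hS_def] at hm
    have hhR : 0 ≤ h R₀ := by
      simp only [hh_def]
      exact div_nonneg (hPpos R₀ hR₀pos).le (hgpos R₀ hR₀pos).le
    nlinarith [Real.exp_pos α, mul_nonneg (by positivity : (0:ℝ) ≤ 2 * Real.exp α) hhR]
  -- pointwise bound for -v
  have hvbound : ∀ r ≥ R₀, -v r ≤ (2 * Real.exp α) * (ψ r / deriv ψ r) + (-w R₀) / P r := by
    intro r hr
    have hrpos : (0:ℝ) < r := lt_of_lt_of_le hR₀pos hr
    have hP := hPpos r hrpos
    have h1 := hwlower r hr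
    have hψr := hψpos r hrpos
    have hψ'r := hψ'pos r hrpos
    have hhr : h r = P r * (ψ r / deriv ψ r) := by
      show P r / g r = _
      rw [hg_def]
      show P r / (deriv ψ r / ψ r) = _
      rw [div_div_eq_mul_div, mul_div_assoc]
    rw [hhr] at h1
    have hwr : w r = P r * v r := by simp only [hw_def]
    rw [hwr] at h1
    have e1 : -v r - (2 * Real.exp α) * (ψ r / deriv ψ r) ≤ (-w R₀) / P r := by
      rw [le_div_iff₀ hP]
      nlinarith [h1]
    linarith
  -- ψ grows at least exponentially on [R₀, ∞)
  have hψgrow : ∀ r ≥ R₀, ψ R₀ * Real.exp (r - R₀) ≤ ψ r := by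
    have hmono : MonotoneOn (fun r => Real.log (ψ r) - r) (Ici R₀) := by
      have hD : ∀ x ≥ R₀, HasDerivAt (fun r => Real.log (ψ r) - r)
          (deriv ψ x / ψ x - 1) x := by
        intro x hx
        have hxpos : (0:ℝ) < x := lt_of_lt_of_le hR₀pos hx
        exact ((hψd x hxpos).log (hψpos x hxpos).ne').sub (hasDerivAt_id x)
      apply monotoneOn_of_deriv_nonneg (convex_Ici R₀)
      · intro x hx
        exact ((hD x hx).differentiableAt.continuousAt).continuousWithinAt
      · intro x hx
        rw [interior_Ici] at hx
        exact (hD x hx.le).differentiableAt.differentiableWithinAt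
      · intro x hx
        rw [interior_Ici] at hx
        rw [(hD x hx.le).deriv]
        have := (hcond x hx.le).1
        simp only [hg_def] at this
        linarith
    intro r hr
    have hmr := hmono self_mem_Ici (mem_Ici.mpr hr) hr
    have hψR := hψpos R₀ hR₀pos
    have hψr := hψpos r (lt_of_lt_of_le hR₀pos hr)
    have hlog : Real.log (ψ R₀) + (r - R₀) ≤ Real.log (ψ r) := by
      simp only [] at hmr; linarith
    calc ψ R₀ * Real.exp (r - R₀) = Real.exp (Real.log (ψ R₀) + (r - R₀)) := by
          rw [Real.exp_add, Real.exp_log hψR]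
    _ ≤ Real.exp (Real.log (ψ r)) := Real.exp_le_exp.2 hlog
    _ = ψ r := Real.exp_log hψr
  set c0 : ℝ := ψ R₀ * Real.exp (-R₀) with hc0
  have hc0pos : 0 < c0 := mul_pos (hψpos R₀ hR₀pos) (Real.exp_pos _)
  set R₁ : ℝ := max R₀ (-Real.log c0) with hR₁def
  have hR₁R₀ : R₀ ≤ R₁ := le_max_left _ _
  have hR₁pos : 0 < R₁ := lt_of_lt_of_le hR₀pos hR₁R₀
  have hψ1 : ∀ r ≥ R₁, 1 ≤ ψ r ∧ c0 * Real.exp r ≤ ψ r := by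
    intro r hr
    have hrR₀ : R₀ ≤ r := le_trans hR₁R₀ hr
    have hexp : c0 * Real.exp r = ψ R₀ * Real.exp (r - R₀) := by
      rw [hc0, mul_assoc, ← Real.exp_add]
      ring_nf
    have h2 : c0 * Real.exp r ≤ ψ r := by rw [hexp]; exact hψgrow r hrR₀
    refine ⟨?_, h2⟩
    have h3 : -Real.log c0 ≤ r := le_trans (le_max_right _ _) hr
    have h4 : Real.exp (-Real.log c0) ≤ Real.exp r := Real.exp_le_exp.2 h3
    rw [Real.exp_neg, Real.exp_log hc0pos] at h4
    have h5 : c0 * c0⁻¹ ≤ c0 * Real.exp r := mul_le_mul_of_nonneg_left h4 hc0pos.le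
    rw [mul_inv_cancel₀ hc0pos.ne'] at h5
    linarith
  have hPbound : ∀ r ≥ R₁, (P r)⁻¹ ≤ c0⁻¹ * Real.exp (-r) := by
    intro r hr
    obtain ⟨h1, h2⟩ := hψ1 r hr
    have hPr : ψ r ≤ P r := by
      simp only [hP_def]
      exact le_self_pow₀ h1 (by omega)
    have hce : 0 < c0 * Real.exp r := by positivity
    have h3 : c0 * Real.exp r ≤ P r := le_trans h2 hPr
    calc (P r)⁻¹ ≤ (c0 * Real.exp r)⁻¹ := inv_anti₀ hce h3
    _ = c0⁻¹ * Real.exp (-r) := by rw [mul_inv, Real.exp_neg]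
  -- integrable dominating function
  have hG : IntegrableOn (fun r => 2 * Real.exp α * (ψ r / deriv ψ r)
      + ((-w R₀) * c0⁻¹) * Real.exp (-1 * r)) (Ioi R₁) := by
    apply Integrable.add
    · exact (hint.mono_set (Ioi_subset_Ioi hR₁pos.le)).const_mul _
    · exact (exp_neg_integrableOn_Ioi R₁ one_pos).const_mul _
  have hvint : IntegrableOn v (Ioi R₁) := by
    apply Integrable.mono' hG
    · apply ContinuousOn.aestronglyMeasurable ?_ measurableSet_Ioi
      intro x hx
      have hxpos : (0:ℝ) < x := lt_trans hR₁pos hx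
      exact ((hvd x hxpos).differentiableAt.continuousAt).continuousWithinAt
    · filter_upwards [ae_restrict_mem measurableSet_Ioi] with x hx
      have hxR₁ : R₁ ≤ x := le_of_lt hx
      have hxR₀ : R₀ ≤ x := le_trans hR₁R₀ hxR₁
      have hxpos : (0:ℝ) < x := lt_of_lt_of_le hR₀pos hxR₀
      rw [Real.norm_eq_abs, abs_of_neg (hvneg x hxpos)]
      have h1 := hvbound x hxR₀
      have h2 := hPbound x hxR₁
      have hw0 : (0:ℝ) ≤ -w R₀ := le_of_lt (neg_pos.2 (hwneg R₀ hR₀pos))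
      have h3 : (-w R₀) / P x ≤ ((-w R₀) * c0⁻¹) * Real.exp (-1 * x) := by
        rw [div_eq_mul_inv, mul_assoc]
        apply mul_le_mul_of_nonneg_left _ hw0
        calc (P x)⁻¹ ≤ c0⁻¹ * Real.exp (-x) := h2
        _ = c0⁻¹ * Real.exp (-1 * x) := by rw [neg_one_mul]
      linarith
  -- conclusion via the improper integral
  have hvint' : IntegrableOn v (Ici R₁) := by
    rwa [integrableOn_Ici_iff_integrableOn_Ioi]
  have hFTC : ∀ b ≥ R₁, u b = u R₁ + ∫ x in R₁..b, v x := by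
    intro b hb
    have heq : ∫ x in R₁..b, v x = u b - u R₁ := by
      apply intervalIntegral.integral_eq_sub_of_hasDerivAt
      · intro x hx
        rw [uIcc_of_le hb] at hx
        exact hud x (lt_of_lt_of_le hR₁pos hx.1)
      · apply IntegrableOn.intervalIntegrable
        apply hvint'.mono_set
        rw [uIcc_of_le hb]
        exact Icc_subset_Ici_self
    rw [heq]; ring
  have hlim := MeasureTheory.intervalIntegral_tendsto_integral_Ioi R₁ hvint tendsto_id
  set I : ℝ := ∫ x in Ioi R₁, v x with hI
  have hIle : I ≤ 0 := by
    apply setIntegral_nonpos measurableSet_Ioi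
    intro x hx
    exact (hvneg x (lt_trans hR₁pos hx)).le
  refine ⟨u R₁ + I, ?_, ?_⟩
  · have : u R₁ < α := by
      rw [← hu0]
      exact huanti self_mem_Ici (mem_Ici.mpr hR₁pos.le) hR₁pos
    linarith
  · have h2 : Tendsto (fun b => u R₁ + ∫ x in R₁..b, v x) atTop (𝓝 (u R₁ + I)) :=
      tendsto_const_nhds.add hlim
    apply Tendsto.congr' _ h2
    filter_upwards [eventually_ge_atTop R₁] with b hb
    exact (hFTC b hb).symm
end

section
/- Let α₁ > α₂ ≥ α₃ > α₄ be real numbers and let u_{α₁}, u_{α₂}, u_{α₃}, u_{α₄} be the corresponding solutions of the initial value problem. If u_{α₃} and u_{α₄} intersect at some point r̄ > 0 (i.e. u_{α₃}(r̄) = u_{α₄}(r̄)), then u_{α₁} and u_{α₂} intersect at some point r with 0 < r ≤ r̄; that is, the first intersection between u_{α₁} and u_{α₂} cannot take place after the first intersection between u_{α₃} and u_{α₄}. -/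
set_option maxHeartbeats 1000000

open Set Real Filter MeasureTheory intervalIntegral Topology

private lemma exp_lip {x y M : ℝ} (hx : x ≤ M) (hy : y ≤ M) :
    |Real.exp x - Real.exp y| ≤ Real.exp M * |x - y| := by
  have key : ∀ s t : ℝ, t ≤ s → s ≤ M → Real.exp s - Real.exp t ≤ Real.exp M * (s - t) := by
    intro s t hts hsM
    have h1 : Real.exp t ≥ Real.exp s * (1 + (t - s)) := by
      have h := Real.add_one_le_exp (t - s)
      have he : Real.exp t = Real.exp s * Real.exp (t - s) := by
        rw [← Real.exp_add]; ring_nf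
      rw [he]
      have := mul_le_mul_of_nonneg_left h (Real.exp_nonneg s)
      linarith
    have h2 : Real.exp s ≤ Real.exp M := Real.exp_le_exp.mpr hsM
    nlinarith [Real.exp_pos s]
  rcases le_total y x with h | h
  · rw [abs_of_nonneg (by simpa using Real.exp_le_exp.mpr h), abs_of_nonneg (by linarith)]
    exact key x y h hx
  · rw [abs_of_nonpos (by simpa using Real.exp_le_exp.mpr h), abs_of_nonpos (by linarith)]
    have := key y x h hy
    linarith

private lemma exp_slope_ineq {a b c d : ℝ} (hba : b < a) (hdc : d < c) (hca : c ≤ a)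
    (hdb : d ≤ b) : (a - b) * (Real.exp c - Real.exp d) ≤ (c - d) * (Real.exp a - Real.exp b) := by
  have hmono1 := convexOn_exp.slope_mono (x := d) (mem_univ d)
  have hmono2 := convexOn_exp.slope_mono (x := a) (mem_univ a)
  have hda : d < a := lt_of_lt_of_le hdc hca
  have h1 : slope Real.exp d c ≤ slope Real.exp d a :=
    hmono1 (by simp [hdc.ne']) (by simp [hda.ne']) hca
  have h2 : slope Real.exp a d ≤ slope Real.exp a b :=
    hmono2 (by simp [hda.ne]) (by simp [hba.ne]) hdb
  rw [slope_comm] at h2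
  have h3 : slope Real.exp d c ≤ slope Real.exp a b := le_trans h1 h2
  rw [slope_def_field, slope_def_field] at h3
  have h4 : (Real.exp c - Real.exp d) / (c - d) ≤ (Real.exp a - Real.exp b) / (a - b) := by
    have : (Real.exp b - Real.exp a) / (b - a) = (Real.exp a - Real.exp b) / (a - b) := by
      rw [← neg_sub (Real.exp a) (Real.exp b), ← neg_sub a b, neg_div_neg_eq]
    linarith [h3, this.symm.le]
  rw [div_le_div_iff₀ (by linarith) (by linarith)] at h4
  nlinarith [h4]

structure Sol (N : ℕ) (ψ : ℝ → ℝ) (u : ℝ → ℝ) : Prop where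
  c2 : ContDiffOn ℝ 2 u (Ici 0)
  ode : ∀ r : ℝ, 0 < r → deriv (deriv u) r + ((N : ℝ) - 1) * (deriv ψ r / ψ r) * deriv u r
      + Real.exp (u r) = 0

private lemma reg_diff {u : ℝ → ℝ} (h : ContDiffOn ℝ 2 u (Ici 0)) {r : ℝ} (hr : 0 < r) :
    DifferentiableAt ℝ u r :=
  (h.contDiffAt (Ici_mem_nhds hr)).differentiableAt two_ne_zero

private lemma reg_deriv {u : ℝ → ℝ} (h : ContDiffOn ℝ 2 u (Ici 0)) :
    ContDiffOn ℝ 1 (deriv u) (Ioi 0) :=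
  (h.mono (Ioi_subset_Ici le_rfl)).deriv_of_isOpen isOpen_Ioi (by norm_num)

private lemma reg_diff2 {u : ℝ → ℝ} (h : ContDiffOn ℝ 2 u (Ici 0)) {r : ℝ} (hr : 0 < r) :
    DifferentiableAt ℝ (deriv u) r :=
  (((reg_deriv h).differentiableOn one_ne_zero) r hr).differentiableAt (isOpen_Ioi.mem_nhds hr)

private lemma reg_cont {u : ℝ → ℝ} (h : ContDiffOn ℝ 2 u (Ici 0)) :
    ContinuousOn u (Ici 0) := h.continuousOn

private lemma reg_contd {u : ℝ → ℝ} (h : ContDiffOn ℝ 2 u (Ici 0)) :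
    ContinuousOn (deriv u) (Ioi 0) := (reg_deriv h).continuousOn

private lemma deriv_tendsto {u : ℝ → ℝ} (h : ContDiffOn ℝ 2 u (Ici 0)) :
    Tendsto (deriv u) (𝓝[>] (0:ℝ)) (𝓝 (derivWithin u (Ici 0) 0)) := by
  have hc : ContinuousOn (derivWithin u (Ici 0)) (Ici 0) :=
    h.continuousOn_derivWithin (uniqueDiffOn_Ici 0) one_le_two
  have h1 : Tendsto (derivWithin u (Ici 0)) (𝓝[>] (0:ℝ)) (𝓝 (derivWithin u (Ici 0) 0)) :=
    (hc 0 (self_mem_Ici)).mono_left (nhdsWithin_mono 0 (Ioi_subset_Ici le_rfl))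
  refine h1.congr' ?_
  filter_upwards [self_mem_nhdsWithin] with x hx
  exact derivWithin_of_mem_nhds (Ici_mem_nhds hx)

private lemma tendsto_at0 {u : ℝ → ℝ} (h : ContDiffOn ℝ 2 u (Ici 0)) :
    Tendsto u (𝓝[>] (0:ℝ)) (𝓝 (u 0)) :=
  ((reg_cont h) 0 self_mem_Ici).mono_left (nhdsWithin_mono 0 (Ioi_subset_Ici le_rfl))

/-- `(ψ^{N-1} u')' = -ψ^{N-1} e^u`. -/
private lemma core {N : ℕ} {ψ : ℝ → ℝ} (hN : 2 ≤ N)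
    (hψC2 : ContDiffOn ℝ 2 ψ (Ici 0)) (hψpos : ∀ r : ℝ, 0 < r → ψ r > 0)
    {u : ℝ → ℝ} (S : Sol N ψ u) {r : ℝ} (hr : 0 < r) :
    HasDerivAt (fun s => ψ s ^ (N-1) * deriv u s) (-(ψ r ^ (N-1) * Real.exp (u r))) r := by
  have hψd : HasDerivAt ψ (deriv ψ r) r := (reg_diff hψC2 hr).hasDerivAt
  have hP : HasDerivAt (fun s => ψ s ^ (N-1))
      (((N-1 : ℕ) : ℝ) * ψ r ^ (N-1-1) * deriv ψ r) r := hψd.pow _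
  have hode : deriv (deriv u) r
      = -(((N:ℝ) - 1) * (deriv ψ r / ψ r) * deriv u r) - Real.exp (u r) := by
    linarith [S.ode r hr]
  have hu2 : HasDerivAt (deriv u)
      (-(((N:ℝ) - 1) * (deriv ψ r / ψ r) * deriv u r) - Real.exp (u r)) r := by
    rw [← hode]; exact (reg_diff2 S.c2 hr).hasDerivAt
  have h := hP.fun_mul hu2
  refine h.congr_deriv ?_
  have hψne : ψ r ≠ 0 := (hψpos r hr).ne'
  have hpow : ψ r ^ (N-1-1) * ψ r = ψ r ^ (N-1) := by
    rw [← pow_succ]; congr 1; omega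
  have hcast : ((N:ℝ) - 1) = ((N-1 : ℕ) : ℝ) := by
    rw [Nat.cast_sub (by omega)]; norm_num
  rw [hcast, ← hpow]
  field_simp
  ring

private lemma sturm {N : ℕ} {ψ : ℝ → ℝ} (hN : 2 ≤ N)
    (hψC2 : ContDiffOn ℝ 2 ψ (Ici 0)) (hψ0 : ψ 0 = 0)
    (hψpos : ∀ r : ℝ, 0 < r → ψ r > 0)
    {a b c d : ℝ → ℝ} (Sa : Sol N ψ a) (Sb : Sol N ψ b) (Sc : Sol N ψ c) (Sd : Sol N ψ d)
    {T : ℝ} (hT : 0 < T)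
    (hw : ∀ r ∈ Ioc (0:ℝ) T, b r < a r)
    (hz : ∀ r ∈ Ioo (0:ℝ) T, d r < c r)
    (hzT : c T = d T)
    (hca : ∀ r ∈ Ioo (0:ℝ) T, c r ≤ a r)
    (hdb : ∀ r ∈ Ioo (0:ℝ) T, d r ≤ b r) : False := by
  set m := N - 1 with hm
  have hm1 : 1 ≤ m := by omega
  set W : ℝ → ℝ := fun x => (ψ x ^ m * deriv a x - ψ x ^ m * deriv b x) * (c x - d x)
      - (a x - b x) * (ψ x ^ m * deriv c x - ψ x ^ m * deriv d x) with hWdef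
  -- derivative of W
  have hW : ∀ r ∈ Ioo (0:ℝ) T, HasDerivAt W
      (ψ r ^ m * ((a r - b r) * (Real.exp (c r) - Real.exp (d r))
        - (c r - d r) * (Real.exp (a r) - Real.exp (b r)))) r := by
    intro r hr
    have hr0 := hr.1
    have h1 := ((core hN hψC2 hψpos Sa hr0).fun_sub (core hN hψC2 hψpos Sb hr0)).fun_mul
      ((reg_diff Sc.c2 hr0).hasDerivAt.fun_sub (reg_diff Sd.c2 hr0).hasDerivAt)
    have h2 := ((reg_diff Sa.c2 hr0).hasDerivAt.fun_sub (reg_diff Sb.c2 hr0).hasDerivAt).fun_mul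
      ((core hN hψC2 hψpos Sc hr0).fun_sub (core hN hψC2 hψpos Sd hr0))
    have h := h1.fun_sub h2
    refine h.congr_deriv ?_
    ring
  -- continuity of W on Ioi 0
  have hψc : ContinuousOn ψ (Ioi 0) := (reg_cont hψC2).mono (Ioi_subset_Ici le_rfl)
  have hcu : ∀ {u : ℝ → ℝ}, Sol N ψ u → ContinuousOn u (Ioi 0) := fun S =>
    (reg_cont S.c2).mono (Ioi_subset_Ici le_rfl)
  have hWc : ContinuousOn W (Ioi 0) := by
    apply ContinuousOn.sub
    · exact (((hψc.pow m).mul (reg_contd Sa.c2)).sub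
        ((hψc.pow m).mul (reg_contd Sb.c2))).mul ((hcu Sc).sub (hcu Sd))
    · exact ((hcu Sa).sub (hcu Sb)).mul
        (((hψc.pow m).mul (reg_contd Sc.c2)).sub ((hψc.pow m).mul (reg_contd Sd.c2)))
  -- antitone on Ioc 0 T
  have hanti : AntitoneOn W (Ioc 0 T) := by
    apply antitoneOn_of_deriv_nonpos (convex_Ioc 0 T)
      (hWc.mono (fun x hx => hx.1))
    · intro x hx
      rw [interior_Ioc] at hx
      exact ((hW x hx).differentiableAt).differentiableWithinAt
    · intro x hx
      rw [interior_Ioc] at hx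
      rw [(hW x hx).deriv]
      have hb1 := hw x ⟨hx.1, hx.2.le⟩
      have hd1 := hz x hx
      have h := exp_slope_ineq hb1 hd1 (hca x hx) (hdb x hx)
      have hP : (0:ℝ) ≤ ψ x ^ m := (pow_nonneg (hψpos x hx.1).le m)
      apply mul_nonpos_of_nonneg_of_nonpos hP
      linarith
  -- limit of W at 0+
  have hW0 : Tendsto W (𝓝[>] (0:ℝ)) (𝓝 0) := by
    have hψ0' : Tendsto (fun x => ψ x ^ m) (𝓝[>] (0:ℝ)) (𝓝 0) := by
      have := (tendsto_at0 hψC2).pow m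
      rwa [hψ0, zero_pow (by omega : m ≠ 0)] at this
    have hterm : ∀ {u : ℝ → ℝ}, Sol N ψ u →
        Tendsto (fun x => ψ x ^ m * deriv u x) (𝓝[>] (0:ℝ)) (𝓝 0) := by
      intro u S
      have := hψ0'.mul (deriv_tendsto S.c2)
      rwa [zero_mul] at this
    have h := (((hterm Sa).sub (hterm Sb)).mul ((tendsto_at0 Sc.c2).sub (tendsto_at0 Sd.c2))).sub
      (((tendsto_at0 Sa.c2).sub (tendsto_at0 Sb.c2)).mul ((hterm Sc).sub (hterm Sd)))
    simpa using h
  -- W ≤ 0 on Ioc 0 T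
  have hWle : ∀ r ∈ Ioc (0:ℝ) T, W r ≤ 0 := by
    intro r hr
    refine ge_of_tendsto hW0 ?_
    filter_upwards [Ioo_mem_nhdsGT_of_mem (⟨le_rfl, hr.1⟩ : (0:ℝ) ∈ Ico 0 r)] with t ht
    exact hanti ⟨ht.1, ht.2.le.trans hr.2⟩ hr ht.2.le
  -- derivative of z at T is ≤ 0
  have hzd : HasDerivAt (fun x => c x - d x) (deriv c T - deriv d T) T :=
    (reg_diff Sc.c2 hT).hasDerivAt.sub (reg_diff Sd.c2 hT).hasDerivAt
  have hz'le : deriv c T - deriv d T ≤ 0 := by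
    have hs := hasDerivAt_iff_tendsto_slope.mp hzd
    have hsub : Iio T ⊆ {T}ᶜ := fun x hx => ne_of_lt hx
    have hs' := hs.mono_left (nhdsWithin_mono T hsub)
    refine le_of_tendsto hs' ?_
    filter_upwards [Ioo_mem_nhdsLT_of_mem (⟨hT, le_rfl⟩ : T ∈ Ioc 0 T)] with x hx
    rw [slope_def_field]
    have h1 : d x < c x := hz x hx
    have h2 : (c T - d T) = 0 := by rw [hzT]; ring
    apply div_nonpos_of_nonneg_of_nonpos
    · rw [h2]; linarith
    · linarith [hx.2]
  -- W T = 0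
  have hPT : 0 < ψ T ^ m := pow_pos (hψpos T hT) m
  have hwT : b T < a T := hw T ⟨hT, le_rfl⟩
  have hWT : W T = 0 := by
    have h1 : W T ≤ 0 := hWle T ⟨hT, le_rfl⟩
    have h2 : W T = -(ψ T ^ m * ((a T - b T) * (deriv c T - deriv d T))) := by
      rw [hWdef]
      simp only []
      rw [show c T - d T = 0 by rw [hzT]; ring]
      ring
    nlinarith [mul_nonneg (hPT.le) (mul_nonneg (by linarith : (0:ℝ) ≤ a T - b T)
      (by linarith : (0:ℝ) ≤ -(deriv c T - deriv d T)))]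
  -- W ≡ 0 on Ioc 0 T, hence the Wronskian vanishes
  have hWzero : ∀ r ∈ Ioc (0:ℝ) T, (deriv a r - deriv b r) * (c r - d r)
      - (a r - b r) * (deriv c r - deriv d r) = 0 := by
    intro r hr
    have h1 : W r ≤ 0 := hWle r hr
    have h2 : W T ≤ W r := hanti hr ⟨hT, le_rfl⟩ hr.2
    have h3 : W r = 0 := le_antisymm h1 (hWT ▸ h2)
    have hPr : ψ r ^ m ≠ 0 := (pow_pos (hψpos r hr.1) m).ne'
    have h4 : W r = ψ r ^ m * ((deriv a r - deriv b r) * (c r - d r)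
        - (a r - b r) * (deriv c r - deriv d r)) := by rw [hWdef]; ring
    rw [h4] at h3
    exact (mul_eq_zero.mp h3).resolve_left hPr
  -- quotient argument
  set Q : ℝ → ℝ := fun x => (c x - d x) / (a x - b x) with hQdef
  have hwpos : ∀ x ∈ Icc (T/2) T, b x < a x := fun x hx =>
    hw x ⟨lt_of_lt_of_le (by linarith) hx.1, hx.2⟩
  have hQc : ContinuousOn Q (Icc (T/2) T) := by
    have hs : Icc (T/2) T ⊆ Ioi 0 := fun x hx => lt_of_lt_of_le (by linarith) hx.1
    exact ContinuousOn.div (((hcu Sc).sub (hcu Sd)).mono hs) (((hcu Sa).sub (hcu Sb)).mono hs)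
      (fun x hx => by have := hwpos x hx; intro h; linarith [sub_eq_zero.mp h])
  have hQd : ∀ x ∈ Ico (T/2) T, HasDerivWithinAt Q 0 (Ici x) x := by
    intro x hx
    have hx0 : 0 < x := lt_of_lt_of_le (by linarith) hx.1
    have hxIoc : x ∈ Ioc (0:ℝ) T := ⟨hx0, hx.2.le⟩
    have hwne : a x - b x ≠ 0 := by have := hw x hxIoc; intro h; linarith [sub_eq_zero.mp h]
    have h := HasDerivAt.fun_div ((reg_diff Sc.c2 hx0).hasDerivAt.fun_sub (reg_diff Sd.c2 hx0).hasDerivAt)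
      ((reg_diff Sa.c2 hx0).hasDerivAt.fun_sub (reg_diff Sb.c2 hx0).hasDerivAt) hwne
    have heq : ((deriv c x - deriv d x) * (a x - b x) - (c x - d x) * (deriv a x - deriv b x))
        / (a x - b x) ^ 2 = 0 := by
      have := hWzero x hxIoc
      have hnum : (deriv c x - deriv d x) * (a x - b x) - (c x - d x) * (deriv a x - deriv b x)
          = 0 := by linarith [hWzero x hxIoc]
      rw [hnum, zero_div]
    rw [heq] at h
    exact h.hasDerivWithinAt
  have hconst := constant_of_has_deriv_right_zero hQc hQd T ⟨by linarith, le_rfl⟩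
  have hQT : Q T = 0 := by
    rw [hQdef]; simp only []
    rw [show c T - d T = 0 by rw [hzT]; ring, zero_div]
  have hQhalf : 0 < Q (T/2) := by
    have hmem : T/2 ∈ Ioo (0:ℝ) T := ⟨by linarith, by linarith⟩
    exact div_pos (by linarith [hz _ hmem]) (by linarith [hw _ ⟨hmem.1, hmem.2.le⟩])
  rw [hconst] at hQT
  linarith

private lemma uniq {N : ℕ} {ψ : ℝ → ℝ} (hN : 2 ≤ N)
    (hψC2 : ContDiffOn ℝ 2 ψ (Ici 0)) (hψ0 : ψ 0 = 0)
    (hψpos : ∀ r : ℝ, 0 < r → ψ r > 0)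
    (hψ'pos : ∀ r : ℝ, 0 < r → deriv ψ r > 0)
    {u v : ℝ → ℝ} (Su : Sol N ψ u) (Sv : Sol N ψ v) (h0 : u 0 = v 0)
    {B : ℝ} (hB : 0 < B) : ∀ r ∈ Icc (0:ℝ) B, u r = v r := by
  set m := N - 1 with hm
  have hm1 : 1 ≤ m := by omega
  -- ψ is monotone on [0, ∞)
  have hψmono : MonotoneOn ψ (Ici 0) := by
    apply (strictMonoOn_of_deriv_pos (convex_Ici 0) (reg_cont hψC2) ?_).monotoneOn
    intro x hx
    rw [interior_Ici] at hx
    exact hψ'pos x hx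
  -- bound for u, v on [0,B]
  obtain ⟨xu, _, hxu⟩ := isCompact_Icc.exists_isMaxOn (nonempty_Icc.mpr hB.le)
    ((reg_cont Su.c2).mono (Icc_subset_Ici_self))
  obtain ⟨xv, _, hxv⟩ := isCompact_Icc.exists_isMaxOn (nonempty_Icc.mpr hB.le)
    ((reg_cont Sv.c2).mono (Icc_subset_Ici_self))
  set M : ℝ := max (u xu) (v xv) with hM
  have hMu : ∀ s ∈ Icc (0:ℝ) B, u s ≤ M := fun s hs => le_trans (hxu hs) (le_max_left _ _)
  have hMv : ∀ s ∈ Icc (0:ℝ) B, v s ≤ M := fun s hs => le_trans (hxv hs) (le_max_right _ _)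
  set L : ℝ := Real.exp M with hL
  have hLpos : 0 < L := Real.exp_pos M
  set z : ℝ → ℝ := fun t => u t - v t with hzdef
  have hzc : ContinuousOn z (Ici 0) := (reg_cont Su.c2).sub (reg_cont Sv.c2)
  have hzac : ContinuousOn (fun t => |z t|) (Ici 0) := hzc.abs
  have hzint : ∀ s r : ℝ, 0 ≤ s → s ≤ r → r ≤ B →
      IntervalIntegrable (fun t => |z t|) volume s r := by
    intro s r hs hsr _
    apply ContinuousOn.intervalIntegrable
    rw [uIcc_of_le hsr]
    exact hzac.mono (fun x hx => le_trans hs hx.1)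
  set g : ℝ → ℝ := fun r => ∫ t in (0:ℝ)..r, |z t| with hgdef
  have hgnonneg : ∀ r ∈ Icc (0:ℝ) B, 0 ≤ g r := by
    intro r hr
    exact intervalIntegral.integral_nonneg hr.1 (fun x _ => abs_nonneg _)
  have hgmono : ∀ s r : ℝ, 0 ≤ s → s ≤ r → r ≤ B → (∫ t in s..r, |z t|) ≤ g r := by
    intro s r hs hsr hrB
    have hadd := intervalIntegral.integral_add_adjacent_intervals
      (hzint 0 s le_rfl hs (hsr.trans hrB)) (hzint s r hs hsr hrB)
    have h1 : 0 ≤ ∫ t in (0:ℝ)..s, |z t| :=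
      intervalIntegral.integral_nonneg hs (fun x _ => abs_nonneg _)
    rw [hgdef]
    simp only []
    rw [← hadd]
    linarith
  -- key1 : derivative bound
  have key1 : ∀ r ∈ Ioc (0:ℝ) B, |deriv u r - deriv v r| ≤ L * g r := by
    intro r hr
    set F : ℝ → ℝ := fun s => ψ s ^ m * deriv u s - ψ s ^ m * deriv v s with hFdef
    have hF' : ∀ s : ℝ, 0 < s → HasDerivAt F
        (-(ψ s ^ m * Real.exp (u s)) - -(ψ s ^ m * Real.exp (v s))) s := fun s hs =>
      (core hN hψC2 hψpos Su hs).sub (core hN hψC2 hψpos Sv hs)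
    have hψc : ContinuousOn ψ (Ioi 0) := (reg_cont hψC2).mono (Ioi_subset_Ici le_rfl)
    have hGc : ContinuousOn (fun s => -(ψ s ^ m * Real.exp (u s)) - -(ψ s ^ m * Real.exp (v s)))
        (Ioi 0) := by
      apply ContinuousOn.sub
      · exact (((hψc.pow m).mul (((reg_cont Su.c2).mono (Ioi_subset_Ici le_rfl)).rexp)).neg)
      · exact (((hψc.pow m).mul (((reg_cont Sv.c2).mono (Ioi_subset_Ici le_rfl)).rexp)).neg)
    -- for every ε ∈ (0, r), |F r| ≤ |F ε| + ψ r ^ m * (L * g r)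
    have hstep : ∀ ε ∈ Ioo (0:ℝ) r, |F r| ≤ |F ε| + ψ r ^ m * (L * g r) := by
      intro ε hε
      have hεr : ε ≤ r := hε.2.le
      have hsubset : Icc ε r ⊆ Ioi (0:ℝ) := fun x hx => lt_of_lt_of_le hε.1 hx.1
      have hFTC := intervalIntegral.integral_eq_sub_of_hasDerivAt
        (f := F) (f' := fun s => -(ψ s ^ m * Real.exp (u s)) - -(ψ s ^ m * Real.exp (v s)))
        (fun x hx => hF' x (hsubset (by rwa [uIcc_of_le hεr] at hx)))
        (ContinuousOn.intervalIntegrable (by rw [uIcc_of_le hεr]; exact hGc.mono hsubset))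
      -- bound the integral
      have hptw : ∀ x ∈ Icc ε r, |(-(ψ x ^ m * Real.exp (u x)) - -(ψ x ^ m * Real.exp (v x)))|
          ≤ ψ r ^ m * (L * |z x|) := by
        intro x hx
        have hx0 : 0 < x := hsubset hx
        have hxB : x ∈ Icc (0:ℝ) B := ⟨hx0.le, hx.2.trans hr.2⟩
        have h1 : |(-(ψ x ^ m * Real.exp (u x)) - -(ψ x ^ m * Real.exp (v x)))|
            = ψ x ^ m * |Real.exp (u x) - Real.exp (v x)| := by
          rw [show (-(ψ x ^ m * Real.exp (u x)) - -(ψ x ^ m * Real.exp (v x)))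
            = ψ x ^ m * (Real.exp (v x) - Real.exp (u x)) by ring]
          rw [abs_mul, abs_of_nonneg (pow_nonneg (hψpos x hx0).le m), abs_sub_comm]
        rw [h1]
        have h2 : |Real.exp (u x) - Real.exp (v x)| ≤ L * |z x| :=
          exp_lip (hMu x hxB) (hMv x hxB)
        have h3 : ψ x ^ m ≤ ψ r ^ m := by
          apply pow_le_pow_left₀ (hψpos x hx0).le
          exact hψmono (mem_Ici.mpr hx0.le) (mem_Ici.mpr (hx0.trans_le hx.2).le) hx.2
        calc ψ x ^ m * |Real.exp (u x) - Real.exp (v x)| ≤ ψ x ^ m * (L * |z x|) := by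
              apply mul_le_mul_of_nonneg_left h2 (pow_nonneg (hψpos x hx0).le m)
          _ ≤ ψ r ^ m * (L * |z x|) := by
              apply mul_le_mul_of_nonneg_right h3 (mul_nonneg hLpos.le (abs_nonneg _))
      have hint1 : IntervalIntegrable (fun s => -(ψ s ^ m * Real.exp (u s))
          - -(ψ s ^ m * Real.exp (v s))) volume ε r :=
        ContinuousOn.intervalIntegrable (by rw [uIcc_of_le hεr]; exact hGc.mono hsubset)
      have hint2 : IntervalIntegrable (fun x => ψ r ^ m * (L * |z x|)) volume ε r :=
        ContinuousOn.intervalIntegrable (by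
          rw [uIcc_of_le hεr]
          exact continuousOn_const.mul (continuousOn_const.mul
            (hzac.mono (fun x hx => le_trans hε.1.le hx.1))))
      have habs := intervalIntegral.abs_integral_le_integral_abs (μ := volume) (a := ε) (b := r)
        (f := fun s => -(ψ s ^ m * Real.exp (u s)) - -(ψ s ^ m * Real.exp (v s))) hεr
      have hmono := intervalIntegral.integral_mono_on (μ := volume) hεr hint1.abs hint2 hptw
      have hconstmul : (∫ x in ε..r, ψ r ^ m * (L * |z x|))
          = ψ r ^ m * L * ∫ x in ε..r, |z x| := by
        rw [← intervalIntegral.integral_const_mul]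
        congr 1; ext x; ring
      have hgbound : (∫ x in ε..r, |z x|) ≤ g r := hgmono ε r hε.1.le hεr hr.2
      have : |F r - F ε| ≤ ψ r ^ m * (L * g r) := by
        rw [← hFTC]
        calc |∫ s in ε..r, (-(ψ s ^ m * Real.exp (u s)) - -(ψ s ^ m * Real.exp (v s)))|
            ≤ ∫ s in ε..r, |(-(ψ s ^ m * Real.exp (u s)) - -(ψ s ^ m * Real.exp (v s)))| := habs
          _ ≤ ∫ x in ε..r, ψ r ^ m * (L * |z x|) := hmono
          _ = ψ r ^ m * L * ∫ x in ε..r, |z x| := hconstmul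
          _ ≤ ψ r ^ m * L * g r := by
              apply mul_le_mul_of_nonneg_left hgbound
                (mul_nonneg (pow_nonneg (hψpos r hr.1).le m) hLpos.le)
          _ = ψ r ^ m * (L * g r) := by ring
      calc |F r| ≤ |F ε| + |F r - F ε| := by
            have := abs_add_le (F ε) (F r - F ε)
            simpa using this
        _ ≤ |F ε| + ψ r ^ m * (L * g r) := by linarith
    -- limit as ε → 0+
    have hFlim : Tendsto (fun ε => |F ε| + ψ r ^ m * (L * g r)) (𝓝[>] (0:ℝ))
        (𝓝 (ψ r ^ m * (L * g r))) := by
      have hψ0' : Tendsto (fun x => ψ x ^ m) (𝓝[>] (0:ℝ)) (𝓝 0) := by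
        have := (tendsto_at0 hψC2).pow m
        rwa [hψ0, zero_pow (by omega : m ≠ 0)] at this
      have hF0 : Tendsto F (𝓝[>] (0:ℝ)) (𝓝 0) := by
        have h := (hψ0'.mul (deriv_tendsto Su.c2)).sub (hψ0'.mul (deriv_tendsto Sv.c2))
        simpa using h
      have h2 : Tendsto (fun ε => |F ε| + ψ r ^ m * (L * g r)) (𝓝[>] (0:ℝ))
          (𝓝 (|0| + ψ r ^ m * (L * g r))) :=
        hF0.abs.add (tendsto_const_nhds (x := ψ r ^ m * (L * g r)))
      simpa using h2
    have hFr : |F r| ≤ ψ r ^ m * (L * g r) := by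
      refine ge_of_tendsto hFlim ?_
      filter_upwards [Ioo_mem_nhdsGT_of_mem (⟨le_rfl, hr.1⟩ : (0:ℝ) ∈ Ico 0 r)] with ε hε
      exact hstep ε hε
    -- divide by ψ r ^ m
    have hPr : 0 < ψ r ^ m := pow_pos (hψpos r hr.1) m
    have hFr' : |F r| = ψ r ^ m * |deriv u r - deriv v r| := by
      rw [hFdef]
      simp only []
      rw [show ψ r ^ m * deriv u r - ψ r ^ m * deriv v r
        = ψ r ^ m * (deriv u r - deriv v r) by ring]
      rw [abs_mul, abs_of_nonneg hPr.le]
    rw [hFr'] at hFr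
    exact le_of_mul_le_mul_left hFr hPr
  -- key2 : |z r| ≤ (L * B) * g r
  have key2 : ∀ r ∈ Icc (0:ℝ) B, |z r| ≤ L * B * g r := by
    intro r hr
    rcases eq_or_lt_of_le hr.1 with h | hrpos
    · rw [hzdef]
      simp only []
      rw [← h, h0]
      simp [hgdef]
    · -- r > 0
      have hstep : ∀ ε ∈ Ioo (0:ℝ) r, |z r - z ε| ≤ L * g r * B := by
        intro ε hε
        have hεr : ε ≤ r := hε.2.le
        have hsubset : Icc ε r ⊆ Ioi (0:ℝ) := fun x hx => lt_of_lt_of_le hε.1 hx.1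
        have hdc : ContinuousOn (fun s => deriv u s - deriv v s) (Ioi 0) :=
          (reg_contd Su.c2).sub (reg_contd Sv.c2)
        have hFTC := intervalIntegral.integral_eq_sub_of_hasDerivAt
          (f := z) (f' := fun s => deriv u s - deriv v s)
          (fun x hx => by
            have hx' : x ∈ Icc ε r := by rwa [uIcc_of_le hεr] at hx
            exact ((reg_diff Su.c2 (hsubset hx')).hasDerivAt.sub
              (reg_diff Sv.c2 (hsubset hx')).hasDerivAt))
          (ContinuousOn.intervalIntegrable (by rw [uIcc_of_le hεr]; exact hdc.mono hsubset))
        have hbound := intervalIntegral.norm_integral_le_of_norm_le_const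
          (f := fun s => deriv u s - deriv v s) (C := L * g r) (a := ε) (b := r) ?_
        · rw [hFTC] at hbound
          have h1 : |r - ε| ≤ B := by
            rw [abs_of_nonneg (by linarith)]
            linarith [hr.2, hε.1]
          calc |z r - z ε| ≤ L * g r * |r - ε| := by
                have hLg : 0 ≤ L * g r := mul_nonneg hLpos.le (hgnonneg r hr)
                calc |z r - z ε| = ‖z r - z ε‖ := rfl
                  _ ≤ L * g r * |r - ε| := by
                      have := hbound
                      simpa using this
            _ ≤ L * g r * B := by
                apply mul_le_mul_of_nonneg_left h1 (mul_nonneg hLpos.le (hgnonneg r hr))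
        · intro x hx
          rw [uIoc_of_le hεr] at hx
          have hx0 : 0 < x := lt_trans hε.1 hx.1
          have hxB : x ∈ Ioc (0:ℝ) B := ⟨hx0, hx.2.trans hr.2⟩
          have h1 : |deriv u x - deriv v x| ≤ L * g x := key1 x hxB
          have h2 : g x ≤ g r := by
            have hadd := intervalIntegral.integral_add_adjacent_intervals
              (hzint 0 x le_rfl hx0.le (hx.2.trans hr.2))
              (hzint x r hx0.le hx.2 hr.2)
            have h3 : 0 ≤ ∫ t in x..r, |z t| :=
              intervalIntegral.integral_nonneg hx.2 (fun t _ => abs_nonneg _)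
            rw [hgdef]; simp only []
            rw [← hadd]; linarith
          calc ‖deriv u x - deriv v x‖ = |deriv u x - deriv v x| := rfl
            _ ≤ L * g x := h1
            _ ≤ L * g r := by apply mul_le_mul_of_nonneg_left h2 hLpos.le
      -- limit ε → 0+
      have hzlim : Tendsto (fun ε => |z r - z ε|) (𝓝[>] (0:ℝ)) (𝓝 |z r|) := by
        have hz0 : Tendsto z (𝓝[>] (0:ℝ)) (𝓝 0) := by
          have := (tendsto_at0 Su.c2).sub (tendsto_at0 Sv.c2)
          rw [h0, sub_self] at this
          exact this
        have := (tendsto_const_nhds (α := ℝ) (x := z r)).sub hz0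
        rw [sub_zero] at this
        exact this.abs
      have : |z r| ≤ L * g r * B := by
        refine le_of_tendsto hzlim ?_
        filter_upwards [Ioo_mem_nhdsGT_of_mem (⟨le_rfl, hrpos⟩ : (0:ℝ) ∈ Ico 0 r)] with ε hε
        exact hstep ε hε
      linarith [this]
  -- Gronwall
  set K : ℝ := L * B with hK
  have hKpos : 0 < K := mul_pos hLpos hB
  have hg' : ∀ r ∈ Ioo (0:ℝ) B, HasDerivAt g (|z r|) r := by
    intro r hr
    apply intervalIntegral.integral_hasDerivAt_right (hzint 0 r le_rfl hr.1.le hr.2.le)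
    · exact (hzac.mono (Ioi_subset_Ici le_rfl)).stronglyMeasurableAtFilter isOpen_Ioi r hr.1
    · exact ((hzc.continuousAt (Ici_mem_nhds hr.1))).abs
  have hgc : ContinuousOn g (Icc 0 B) := by
    have h := intervalIntegral.continuousOn_primitive_interval'
      (hzint 0 B le_rfl hB.le le_rfl) (left_mem_uIcc (a := (0:ℝ)) (b := B))
    rwa [uIcc_of_le hB.le] at h
  set φ : ℝ → ℝ := fun r => g r * Real.exp (-(K * r)) with hφ
  have hexpd : ∀ x : ℝ, HasDerivAt (fun r => Real.exp (-(K * r)))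
      (Real.exp (-(K * x)) * (-K)) x := by
    intro x
    have h1 : HasDerivAt (fun r : ℝ => -(K * r)) (-K) x := by
      simpa using ((hasDerivAt_id x).const_mul K).fun_neg
    simpa using h1.exp
  have hφanti : AntitoneOn φ (Icc 0 B) := by
    apply antitoneOn_of_deriv_nonpos (f := φ) (convex_Icc 0 B)
      (hgc.mul (Continuous.continuousOn (by continuity)))
    · intro x hx
      rw [interior_Icc] at hx
      exact (((hg' x hx).mul (hexpd x)).differentiableAt).differentiableWithinAt
    · intro x hx
      rw [interior_Icc] at hx
      have hφd : HasDerivAt φ (|z x| * Real.exp (-(K * x)) + g x * (Real.exp (-(K * x)) * (-K)))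
          x := (hg' x hx).mul (hexpd x)
      rw [hφd.deriv]
      have hx' : x ∈ Icc (0:ℝ) B := ⟨hx.1.le, hx.2.le⟩
      have hkey := key2 x hx'
      have hfac : |z x| - K * g x ≤ 0 := by linarith
      have hexp := Real.exp_pos (-(K * x))
      nlinarith [mul_nonpos_of_nonpos_of_nonneg hfac hexp.le]
  intro r hr
  have hφle : φ r ≤ φ 0 := hφanti (left_mem_Icc.mpr hB.le) hr hr.1
  have hφ0 : φ 0 = 0 := by
    rw [hφ]
    simp [hgdef]
  have hgr0 : g r = 0 := by
    have hexp := Real.exp_pos (-(K * r))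
    have h1 : g r * Real.exp (-(K * r)) ≤ 0 := by rw [← hφ0]; exact hφle
    have h2 := hgnonneg r hr
    nlinarith
  have hfin := key2 r hr
  rw [hgr0] at hfin
  have : |z r| ≤ 0 := by linarith
  have : z r = 0 := abs_eq_zero.mp (le_antisymm this (abs_nonneg _))
  exact sub_eq_zero.mp this

private lemma pos_of_ne {f : ℝ → ℝ} {R r : ℝ} (hR : 0 ≤ R) (hf : ContinuousOn f (Icc 0 R))
    (h0 : 0 < f 0) (hr : r ∈ Icc (0:ℝ) R) (hne : ∀ s, 0 < s → s ≤ r → f s ≠ 0) : 0 < f r := by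
  rcases eq_or_lt_of_le hr.1 with h | hrpos
  · rwa [← h]
  by_contra h
  push_neg at h
  have hsub : Icc (0:ℝ) r ⊆ Icc 0 R := Icc_subset_Icc le_rfl hr.2
  have hIVT := intermediate_value_Icc' hr.1 (hf.mono hsub)
  have h0mem : (0:ℝ) ∈ Icc (f r) (f 0) := ⟨h, h0.le⟩
  obtain ⟨x, hx, hfx⟩ := hIVT h0mem
  have hx0 : 0 < x := by
    rcases eq_or_lt_of_le hx.1 with h' | h'
    · exfalso; rw [← h'] at hfx; linarith
    · exact h'
  exact hne x hx0 hx.2 hfx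

theorem statement11 (N : ℕ) (hN : 2 ≤ N) (ψ : ℝ → ℝ)
    (hψC2 : ContDiffOn ℝ 2 ψ (Ici 0))
    (hψpos : ∀ r > (0:ℝ), ψ r > 0)
    (hψ0 : ψ 0 = 0) (hψ''0 : deriv (deriv ψ) 0 = 0) (hψ'0 : deriv ψ 0 = 1)
    (hψ'pos : ∀ r > (0:ℝ), deriv ψ r > 0)
    (Λ : EReal) (hΛpos : 0 < Λ)
    (hA3 : Filter.Tendsto (fun r => ((deriv ψ r / ψ r : ℝ) : EReal)) Filter.atTop (nhds Λ))
    (α₁ α₂ α₃ α₄ : ℝ) (h12 : α₁ > α₂) (h23 : α₂ ≥ α₃) (h34 : α₃ > α₄)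
    (u₁ u₂ u₃ u₄ : ℝ → ℝ)
    (hu₁C2 : ContDiffOn ℝ 2 u₁ (Ici 0)) (hu₁0 : u₁ 0 = α₁) (hu₁'0 : deriv u₁ 0 = 0)
    (hode₁ : ∀ r > (0:ℝ), deriv (deriv u₁) r + ((N : ℝ) - 1) * (deriv ψ r / ψ r) * deriv u₁ r
      + Real.exp (u₁ r) = 0)
    (hu₂C2 : ContDiffOn ℝ 2 u₂ (Ici 0)) (hu₂0 : u₂ 0 = α₂) (hu₂'0 : deriv u₂ 0 = 0)
    (hode₂ : ∀ r > (0:ℝ), deriv (deriv u₂) r + ((N : ℝ) - 1) * (deriv ψ r / ψ r) * deriv u₂ r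
      + Real.exp (u₂ r) = 0)
    (hu₃C2 : ContDiffOn ℝ 2 u₃ (Ici 0)) (hu₃0 : u₃ 0 = α₃) (hu₃'0 : deriv u₃ 0 = 0)
    (hode₃ : ∀ r > (0:ℝ), deriv (deriv u₃) r + ((N : ℝ) - 1) * (deriv ψ r / ψ r) * deriv u₃ r
      + Real.exp (u₃ r) = 0)
    (hu₄C2 : ContDiffOn ℝ 2 u₄ (Ici 0)) (hu₄0 : u₄ 0 = α₄) (hu₄'0 : deriv u₄ 0 = 0)
    (hode₄ : ∀ r > (0:ℝ), deriv (deriv u₄) r + ((N : ℝ) - 1) * (deriv ψ r / ψ r) * deriv u₄ r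
      + Real.exp (u₄ r) = 0)
    (rbar : ℝ) (hrbar : 0 < rbar) (hint34 : u₃ rbar = u₄ rbar)
    : ∃ r : ℝ, 0 < r ∧ r ≤ rbar ∧ u₁ r = u₂ r := by
  by_contra hcon
  push_neg at hcon
  have hψpos' : ∀ r : ℝ, 0 < r → ψ r > 0 := fun r hr => hψpos r hr
  have S₁ : Sol N ψ u₁ := ⟨hu₁C2, fun r hr => hode₁ r hr⟩
  have S₂ : Sol N ψ u₂ := ⟨hu₂C2, fun r hr => hode₂ r hr⟩
  have S₃ : Sol N ψ u₃ := ⟨hu₃C2, fun r hr => hode₃ r hr⟩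
  have S₄ : Sol N ψ u₄ := ⟨hu₄C2, fun r hr => hode₄ r hr⟩
  have hc : ∀ {u : ℝ → ℝ}, Sol N ψ u → ContinuousOn u (Icc 0 rbar) := fun S =>
    (reg_cont S.c2).mono Icc_subset_Ici_self
  -- u₁ > u₂ on (0, rbar]
  have hw : ∀ r, 0 < r → r ≤ rbar → u₂ r < u₁ r := by
    intro r hr0 hrr
    have h : (0:ℝ) < u₁ r - u₂ r := pos_of_ne (f := fun x => u₁ x - u₂ x) hrbar.le ((hc S₁).sub (hc S₂))
      (by show (0:ℝ) < u₁ 0 - u₂ 0; rw [hu₁0, hu₂0]; linarith) ⟨hr0.le, hrr⟩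
      (fun s hs0 hsr h => hcon s hs0 (hsr.trans hrr) (by linarith [sub_eq_zero.mp h]))
    linarith
  -- the set of first touching times
  set E : Set ℝ := {r ∈ Icc (0:ℝ) rbar | u₃ r = u₄ r ∨ u₂ r = u₄ r ∨ u₁ r = u₃ r} with hE
  have hEclosed : IsClosed E := by
    have h1 : ContinuousOn (fun r => (u₃ r - u₄ r) * (u₂ r - u₄ r) * (u₁ r - u₃ r))
        (Icc 0 rbar) := (((hc S₃).sub (hc S₄)).mul ((hc S₂).sub (hc S₄))).mul
          ((hc S₁).sub (hc S₃))
    have h2 : E = Icc (0:ℝ) rbar ∩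
        (fun r => (u₃ r - u₄ r) * (u₂ r - u₄ r) * (u₁ r - u₃ r)) ⁻¹' {0} := by
      ext r
      simp only [hE, mem_setOf_eq, mem_inter_iff, mem_preimage, mem_singleton_iff]
      constructor
      · rintro ⟨h, hcase⟩
        refine ⟨h, ?_⟩
        rcases hcase with h' | h' | h'
        · rw [show u₃ r - u₄ r = 0 from by linarith]; ring
        · rw [show u₂ r - u₄ r = 0 from by linarith]; ring
        · rw [show u₁ r - u₃ r = 0 from by linarith]; ring
      · rintro ⟨h, h'⟩
        refine ⟨h, ?_⟩
        rcases mul_eq_zero.mp h' with h'' | h''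
        · rcases mul_eq_zero.mp h'' with h3 | h3
          · exact Or.inl (by linarith [sub_eq_zero.mp h3])
          · exact Or.inr (Or.inl (by linarith [sub_eq_zero.mp h3]))
        · exact Or.inr (Or.inr (by linarith [sub_eq_zero.mp h'']))
    rw [h2]
    exact h1.preimage_isClosed_of_isClosed isClosed_Icc isClosed_singleton
  have hEne : E.Nonempty := ⟨rbar, ⟨⟨hrbar.le, le_rfl⟩, Or.inl hint34⟩⟩
  have hEbdd : BddBelow E := ⟨0, fun x hx => hx.1.1⟩
  set R₀ := sInf E with hR₀
  have hR₀mem : R₀ ∈ E := hEclosed.csInf_mem hEne hEbdd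
  obtain ⟨⟨hR₀0, hR₀rbar⟩, hR₀eq⟩ := hR₀mem
  have hR₀pos : 0 < R₀ := by
    rcases eq_or_lt_of_le hR₀0 with h | h
    · exfalso
      rw [← h] at hR₀eq
      rcases hR₀eq with h' | h' | h'
      · rw [hu₃0, hu₄0] at h'; linarith
      · rw [hu₂0, hu₄0] at h'; linarith
      · rw [hu₁0, hu₃0] at h'; linarith
    · exact h
  have hnotE : ∀ s, 0 < s → s < R₀ → ¬(u₃ s = u₄ s ∨ u₂ s = u₄ s ∨ u₁ s = u₃ s) := by
    intro s hs0 hsR hcase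
    have hsE : s ∈ E := ⟨⟨hs0.le, hsR.le.trans hR₀rbar⟩, hcase⟩
    have := csInf_le hEbdd hsE
    rw [← hR₀] at this
    linarith
  have h34pos : ∀ r, 0 < r → r < R₀ → u₄ r < u₃ r := by
    intro r hr0 hrR
    have h : (0:ℝ) < u₃ r - u₄ r := pos_of_ne (f := fun x => u₃ x - u₄ x) hrbar.le
      ((hc S₃).sub (hc S₄))
      (by show (0:ℝ) < u₃ 0 - u₄ 0; rw [hu₃0, hu₄0]; linarith)
      ⟨hr0.le, hrR.le.trans hR₀rbar⟩
      (fun s hs0 hsr hfs => hnotE s hs0 (lt_of_le_of_lt hsr hrR)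
        (Or.inl (by linarith [sub_eq_zero.mp hfs])))
    linarith
  have h24pos : ∀ r, 0 < r → r < R₀ → u₄ r < u₂ r := by
    intro r hr0 hrR
    have h : (0:ℝ) < u₂ r - u₄ r := pos_of_ne (f := fun x => u₂ x - u₄ x) hrbar.le
      ((hc S₂).sub (hc S₄))
      (by show (0:ℝ) < u₂ 0 - u₄ 0; rw [hu₂0, hu₄0]; linarith)
      ⟨hr0.le, hrR.le.trans hR₀rbar⟩
      (fun s hs0 hsr hfs => hnotE s hs0 (lt_of_le_of_lt hsr hrR)
        (Or.inr (Or.inl (by linarith [sub_eq_zero.mp hfs]))))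
    linarith
  have h13pos : ∀ r, 0 < r → r < R₀ → u₃ r < u₁ r := by
    intro r hr0 hrR
    have h : (0:ℝ) < u₁ r - u₃ r := pos_of_ne (f := fun x => u₁ x - u₃ x) hrbar.le
      ((hc S₁).sub (hc S₃))
      (by show (0:ℝ) < u₁ 0 - u₃ 0; rw [hu₁0, hu₃0]; linarith)
      ⟨hr0.le, hrR.le.trans hR₀rbar⟩
      (fun s hs0 hsr hfs => hnotE s hs0 (lt_of_le_of_lt hsr hrR)
        (Or.inr (Or.inr (by linarith [sub_eq_zero.mp hfs]))))
    linarith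
  rcases hR₀eq with hcase | hcase | hcase
  · exact sturm hN hψC2 hψ0 hψpos' S₁ S₂ S₃ S₄ hR₀pos
      (fun r hr => hw r hr.1 (hr.2.trans hR₀rbar))
      (fun r hr => h34pos r hr.1 hr.2)
      hcase
      (fun r hr => (h13pos r hr.1 hr.2).le)
      (fun r hr => (h24pos r hr.1 hr.2).le)
  · exact sturm hN hψC2 hψ0 hψpos' S₁ S₂ S₂ S₄ hR₀pos
      (fun r hr => hw r hr.1 (hr.2.trans hR₀rbar))
      (fun r hr => h24pos r hr.1 hr.2)
      hcase
      (fun r hr => (hw r hr.1 (hr.2.le.trans hR₀rbar)).le)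
      (fun r hr => (h24pos r hr.1 hr.2).le)
  · -- u₁ R₀ = u₃ R₀
    have h2R : u₂ R₀ < u₃ R₀ := by
      have := hw R₀ hR₀pos hR₀rbar
      linarith [hcase]
    rcases eq_or_lt_of_le (h23 : α₃ ≤ α₂) with heq | hlt
    · -- α₂ = α₃ : uniqueness gives u₂ = u₃, contradiction
      have huniq := uniq hN hψC2 hψ0 hψpos' (fun r hr => hψ'pos r hr) S₂ S₃
        (by rw [hu₂0, hu₃0, heq]) hR₀pos
      have h1 := huniq R₀ ⟨hR₀pos.le, le_rfl⟩
      linarith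
    · -- α₃ < α₂ : first crossing of u₂ and u₃
      have hcR : ContinuousOn (fun x => u₂ x - u₃ x) (Icc 0 R₀) :=
        ((hc S₂).sub (hc S₃)).mono (Icc_subset_Icc le_rfl hR₀rbar)
      set E₂ : Set ℝ := {r ∈ Icc (0:ℝ) R₀ | u₂ r = u₃ r} with hE₂
      have hE₂closed : IsClosed E₂ := by
        have h2 : E₂ = Icc (0:ℝ) R₀ ∩ (fun x => u₂ x - u₃ x) ⁻¹' {0} := by
          ext r
          simp only [hE₂, mem_setOf_eq, mem_inter_iff, mem_preimage, mem_singleton_iff]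
          constructor
          · rintro ⟨h, h'⟩; exact ⟨h, by linarith⟩
          · rintro ⟨h, h'⟩; exact ⟨h, by linarith [sub_eq_zero.mp h']⟩
        rw [h2]
        exact hcR.preimage_isClosed_of_isClosed isClosed_Icc isClosed_singleton
      have hE₂ne : E₂.Nonempty := by
        have hIVT := intermediate_value_Icc' hR₀pos.le hcR
        have h0mem : (0:ℝ) ∈ Icc (u₂ R₀ - u₃ R₀) (u₂ 0 - u₃ 0) := by
          constructor
          · linarith
          · rw [hu₂0, hu₃0]; linarith
        obtain ⟨x, hx, hfx⟩ := hIVT h0mem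
        exact ⟨x, hx, by linarith [sub_eq_zero.mp hfx]⟩
      have hE₂bdd : BddBelow E₂ := ⟨0, fun x hx => hx.1.1⟩
      have hs₀mem : sInf E₂ ∈ E₂ := hE₂closed.csInf_mem hE₂ne hE₂bdd
      set s₀ := sInf E₂ with hs₀def
      obtain ⟨⟨hs₀0, hs₀R⟩, hs₀eq⟩ := hs₀mem
      have hs₀pos : 0 < s₀ := by
        rcases eq_or_lt_of_le hs₀0 with h | h
        · exfalso; rw [← h] at hs₀eq; rw [hu₂0, hu₃0] at hs₀eq; linarith
        · exact h
      have h23pos : ∀ r, 0 < r → r < s₀ → u₃ r < u₂ r := by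
        intro r hr0 hrs
        have h : (0:ℝ) < u₂ r - u₃ r := pos_of_ne (f := fun x => u₂ x - u₃ x) hR₀pos.le hcR
          (by show (0:ℝ) < u₂ 0 - u₃ 0; rw [hu₂0, hu₃0]; linarith)
          ⟨hr0.le, hrs.le.trans hs₀R⟩
          (fun t ht0 htr hft => by
            have htE : t ∈ E₂ := ⟨⟨ht0.le, (htr.trans_lt hrs).le.trans hs₀R⟩,
              by linarith [sub_eq_zero.mp hft]⟩
            have := csInf_le hE₂bdd htE
            rw [← hs₀def] at this
            linarith [htr.trans_lt hrs])
        linarith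
      exact sturm hN hψC2 hψ0 hψpos' S₁ S₂ S₂ S₃ hs₀pos
        (fun r hr => hw r hr.1 ((hr.2.trans hs₀R).trans hR₀rbar))
        (fun r hr => h23pos r hr.1 hr.2)
        hs₀eq
        (fun r hr => (hw r hr.1 ((hr.2.le.trans hs₀R).trans hR₀rbar)).le)
        (fun r hr => (h23pos r hr.1 hr.2).le)
end
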